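/- arXiv:1302.4419 — 2 statements merged into one kernel-verified Lean document; each statement's English description precedes it below -/
import Mathlib

section
/- For symmetric f₁, f₄ ∈ H^{⊗n} and f₂, f₃ ∈ H^{⊗m}, the symmetrized tensor products satisfy ⟨f₁ ⊗̃ f₂, f₃ ⊗̃ f₄⟩ = (m! n!/(m+n)!) ∑_{r=0}^{m∧n} C(n,r) C(m,r) ⟨f₁ ⊗_r f₃, f₄ ⊗_r f₂⟩. -/
/-- The inner product of two (coefficient) kernels: `⟨F,G⟩ = ∑' x, F x * G x`. -/
noncomputable def ip {α : Type*} (F G : α → ℝ) : ℝ := ∑' x, F x * G x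

/-- The squared norm `‖F‖² = ⟨F,F⟩` of a kernel. -/
noncomputable def nsq {α : Type*} (F : α → ℝ) : ℝ := ip F F

/-- A kernel of order `n` (an element of `H^{⊗n}` written in coordinates with respect to a
Hilbert basis of `H`) is symmetric if its coefficients are invariant under permutations. -/
def IsSym {n : ℕ} (f : (Fin n → ℕ) → ℝ) : Prop :=
  ∀ σ : Equiv.Perm (Fin n), ∀ j : Fin n → ℕ, f (j ∘ σ) = f j

/-- The contraction of order `r` of a kernel `f` of order `n` with a kernel `g` of order `m`;
the result is a kernel of order `c = n + m - 2r`: `r` indices of `f` and `g` are paired and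
summed out, the remaining `n - r` indices of `f` and `m - r` indices of `g` stay free. -/
noncomputable def contr {n m r c : ℕ} (hrn : r ≤ n) (hrm : r ≤ m) (hc : n + m = 2 * r + c)
    (f : (Fin n → ℕ) → ℝ) (g : (Fin m → ℕ) → ℝ) : (Fin c → ℕ) → ℝ :=
  fun t => ∑' u : Fin r → ℕ,
    (f fun i => if hi : (i : ℕ) < r then u ⟨i, hi⟩
        else t ⟨(i : ℕ) - r, by have := i.isLt; omega⟩) *
    (g fun i => if hi : (i : ℕ) < r then u ⟨i, hi⟩
        else t ⟨n - r + ((i : ℕ) - r), by have := i.isLt; omega⟩)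

/-- Symmetrization of a kernel of order `c`. -/
noncomputable def symmize {c : ℕ} (F : (Fin c → ℕ) → ℝ) : (Fin c → ℕ) → ℝ :=
  fun t => (1 / (Nat.factorial c : ℝ)) * ∑ σ : Equiv.Perm (Fin c), F (t ∘ σ)

/-- `sder f i` is the kernel `s_{i,f} = n ∑_{j₂,…,jₙ} λ_{i,j₂,…,jₙ} e_{j₂}⊗…⊗e_{jₙ}`,
the coefficient kernel of `⟨D Iₙ(f), e_i⟩`. -/
noncomputable def sder {n : ℕ} (f : (Fin n → ℕ) → ℝ) (i : ℕ) : (Fin (n - 1) → ℕ) → ℝ :=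
  fun j => (n : ℝ) * f fun k => if hk : (k : ℕ) = 0 then i
    else j ⟨(k : ℕ) - 1, by have := k.isLt; omega⟩

section NRSection
open Equiv Finset
namespace NR


lemma tsum_comp_perm {N : ℕ} (H : (Fin N → ℕ) → ℝ) (ρ : Equiv.Perm (Fin N)) :
    ∑' t : Fin N → ℕ, H (t ∘ ρ) = ∑' t, H t :=
  (Equiv.arrowCongr ρ.symm (Equiv.refl ℕ)).tsum_eq H

lemma summable_comp_perm {N : ℕ} {H : (Fin N → ℕ) → ℝ} (ρ : Equiv.Perm (Fin N))
    (h : Summable H) : Summable fun t => H (t ∘ ρ) :=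
  (Equiv.summable_iff (Equiv.arrowCongr ρ.symm (Equiv.refl ℕ)) (f := H)).2 h

def splitE (n m : ℕ) : (Fin (n+m) → ℕ) ≃ (Fin n → ℕ) × (Fin m → ℕ) where
  toFun t := (fun i => t ⟨i.1, by have := i.2; omega⟩, fun j => t ⟨n + j.1, by have := j.2; omega⟩)
  invFun p q := if h' : (q : ℕ) < n then p.1 ⟨q, h'⟩ else p.2 ⟨q - n, by have := q.2; omega⟩
  left_inv t := by
    funext q
    by_cases h' : (q : ℕ) < n
    · simp only [dif_pos h']
    · simp only [dif_neg h']
      exact congrArg t (Fin.ext (by simp; omega))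
  right_inv p := by
    refine Prod.ext (funext fun j => ?_) (funext fun j => ?_)
    · have hj : ((⟨j.1, by have := j.2; omega⟩ : Fin (n+m)) : ℕ) < n := j.2
      dsimp only
      rw [dif_pos hj]
    · have hj : ¬ ((⟨n + j.1, by have := j.2; omega⟩ : Fin (n+m)) : ℕ) < n := by simp
      dsimp only
      rw [dif_neg hj]
      exact congrArg p.2 (Fin.ext (by simp))

def splitE' (n m : ℕ) : (Fin (n+m) → ℕ) ≃ (Fin m → ℕ) × (Fin n → ℕ) where
  toFun t := (fun j => t ⟨j.1, by have := j.2; omega⟩, fun i => t ⟨m + i.1, by have := i.2; omega⟩)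
  invFun p q := if h' : (q : ℕ) < m then p.1 ⟨q, h'⟩ else p.2 ⟨q - m, by have := q.2; omega⟩
  left_inv t := by
    funext q
    by_cases h' : (q : ℕ) < m
    · simp only [dif_pos h']
    · simp only [dif_neg h']
      exact congrArg t (Fin.ext (by simp; omega))
  right_inv p := by
    refine Prod.ext (funext fun j => ?_) (funext fun j => ?_)
    · have hj : ((⟨j.1, by have := j.2; omega⟩ : Fin (n+m)) : ℕ) < m := j.2
      dsimp only
      rw [dif_pos hj]
    · have hj : ¬ ((⟨m + j.1, by have := j.2; omega⟩ : Fin (n+m)) : ℕ) < m := by simp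
      dsimp only
      rw [dif_neg hj]
      exact congrArg p.2 (Fin.ext (by simp))

variable {n m : ℕ}

/-- the tensor product `f₁ ⊗ f₂` -/
def Ften (f₁ : (Fin n → ℕ) → ℝ) (f₂ : (Fin m → ℕ) → ℝ) : (Fin (n+m) → ℕ) → ℝ :=
  fun t => f₁ (fun i => t ⟨i.1, by have := i.2; omega⟩) *
    f₂ (fun j => t ⟨n + j.1, by have := j.2; omega⟩)

/-- the tensor product `f₃ ⊗ f₄` -/
def Gten (f₃ : (Fin m → ℕ) → ℝ) (f₄ : (Fin n → ℕ) → ℝ) : (Fin (n+m) → ℕ) → ℝ :=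
  fun t => f₃ (fun j => t ⟨j.1, by have := j.2; omega⟩) *
    f₄ (fun i => t ⟨m + i.1, by have := i.2; omega⟩)

variable {f₁ f₄ : (Fin n → ℕ) → ℝ} {f₂ f₃ : (Fin m → ℕ) → ℝ}

lemma summable_Ften_sq (hs1 : Summable fun j => f₁ j * f₁ j)
    (hs2 : Summable fun j => f₂ j * f₂ j) :
    Summable fun t => Ften f₁ f₂ t * Ften f₁ f₂ t := by
  have h := hs1.mul_of_nonneg hs2 (fun x => mul_self_nonneg _) (fun x => mul_self_nonneg _)
  have h2 := ((splitE n m).summable_iff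
    (f := fun p : (Fin n → ℕ) × (Fin m → ℕ) => (f₁ p.1 * f₁ p.1) * (f₂ p.2 * f₂ p.2))).2 h
  exact h2.congr fun t => mul_mul_mul_comm _ _ _ _

lemma summable_Gten_sq (hs3 : Summable fun j => f₃ j * f₃ j)
    (hs4 : Summable fun j => f₄ j * f₄ j) :
    Summable fun t => Gten f₃ f₄ t * Gten f₃ f₄ t := by
  have h := hs3.mul_of_nonneg hs4 (fun x => mul_self_nonneg _) (fun x => mul_self_nonneg _)
  have h2 := ((splitE' n m).summable_iff
    (f := fun p : (Fin m → ℕ) × (Fin n → ℕ) => (f₃ p.1 * f₃ p.1) * (f₄ p.2 * f₄ p.2))).2 h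
  exact h2.congr fun t => mul_mul_mul_comm _ _ _ _

lemma summable_cross (hs1 : Summable fun j => f₁ j * f₁ j)
    (hs2 : Summable fun j => f₂ j * f₂ j) (hs3 : Summable fun j => f₃ j * f₃ j)
    (hs4 : Summable fun j => f₄ j * f₄ j) (π ρ : Equiv.Perm (Fin (n+m))) :
    Summable fun t => Ften f₁ f₂ (t ∘ π) * Gten f₃ f₄ (t ∘ ρ) := by
  have hF := summable_comp_perm π (summable_Ften_sq hs1 hs2)
  have hG := summable_comp_perm ρ (summable_Gten_sq hs3 hs4)
  refine summable_abs_iff.mp ?_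
  refine Summable.of_nonneg_of_le (fun t => abs_nonneg _) (fun t => ?_) (hF.add hG)
  set a := Ften f₁ f₂ (t ∘ π); set b := Gten f₃ f₄ (t ∘ ρ)
  have h1 : |a * b| = |a| * |b| := abs_mul a b
  nlinarith [sq_nonneg (|a| - |b|), abs_nonneg a, abs_nonneg b, sq_abs a, sq_abs b]

section LHSRed
variable {N : ℕ} {F G : (Fin N → ℕ) → ℝ}

lemma lhs_reduce (hsum : ∀ π ρ : Equiv.Perm (Fin N), Summable fun t => F (t ∘ π) * G (t ∘ ρ)) :
    ip (symmize F) (symmize G)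
      = (1 / (Nat.factorial N : ℝ)) * ∑ π : Equiv.Perm (Fin N), ∑' t, F t * G (t ∘ π) := by
  have hpoint : ∀ t : Fin N → ℕ, symmize F t * symmize G t
      = (1 / (Nat.factorial N : ℝ))^2 *
        ∑ c : Equiv.Perm (Fin N) × Equiv.Perm (Fin N), F (t ∘ c.1) * G (t ∘ c.2) := by
    intro t
    rw [Fintype.sum_prod_type]
    unfold symmize
    dsimp only
    rw [← Finset.sum_mul_sum]
    ring
  have h1 : ip (symmize F) (symmize G)
      = (1 / (Nat.factorial N : ℝ))^2 *
        ∑ c : Equiv.Perm (Fin N) × Equiv.Perm (Fin N), ∑' t, F (t ∘ c.1) * G (t ∘ c.2) := by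
    unfold ip
    rw [tsum_congr hpoint, tsum_mul_left]
    congr 1
    exact Summable.tsum_finsetSum fun c _ => hsum c.1 c.2
  rw [h1, Fintype.sum_prod_type]
  set I : Equiv.Perm (Fin N) → ℝ := fun π => ∑' t, F t * G (t ∘ π) with hI
  have h2 : ∀ σ : Equiv.Perm (Fin N), ∑ τ : Equiv.Perm (Fin N), ∑' t, F (t ∘ σ) * G (t ∘ τ)
      = ∑ π : Equiv.Perm (Fin N), I π := by
    intro σ
    have hστ : ∀ τ : Equiv.Perm (Fin N), (∑' t, F (t ∘ σ) * G (t ∘ τ)) = I (σ⁻¹ * τ) := by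
      intro τ
      rw [hI]
      dsimp only
      rw [← tsum_comp_perm (fun t => F t * G (t ∘ ⇑(σ⁻¹ * τ))) σ]
      refine tsum_congr fun t => ?_
      show F (t ∘ σ) * G (t ∘ τ) = F (t ∘ σ) * G ((t ∘ σ) ∘ ⇑(σ⁻¹ * τ))
      refine congrArg (fun z => F (t ∘ ⇑σ) * z) (congrArg G (funext fun i => ?_))
      simp [Function.comp, Equiv.Perm.mul_apply]
    rw [Finset.sum_congr rfl fun τ _ => hστ τ]
    exact Fintype.sum_equiv (Equiv.mulLeft σ⁻¹)
      (fun τ => I (σ⁻¹ * τ)) I (fun τ => congrArg I (by simp))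
  rw [Finset.sum_congr rfl fun σ _ => h2 σ, Finset.sum_const, card_univ, Fintype.card_perm]
  rw [nsmul_eq_mul]
  have hfac : (Nat.factorial N : ℝ) ≠ 0 := Nat.cast_ne_zero.mpr (Nat.factorial_ne_zero N)
  simp only [Fintype.card_fin, hI]
  field_simp
end LHSRed


lemma subtypeCongr_apply_mem {α : Type*} {p q : α → Prop} [DecidablePred p] [DecidablePred q]
    (e : { x // p x } ≃ { x // q x }) (f : { x // ¬p x } ≃ { x // ¬q x }) (x : α) (hx : p x) :
    Equiv.subtypeCongr e f x = e ⟨x, hx⟩ := by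
  simp [Equiv.subtypeCongr, hx]

lemma subtypeCongr_apply_not_mem {α : Type*} {p q : α → Prop} [DecidablePred p] [DecidablePred q]
    (e : { x // p x } ≃ { x // q x }) (f : { x // ¬p x } ≃ { x // ¬q x }) (x : α) (hx : ¬ p x) :
    Equiv.subtypeCongr e f x = f ⟨x, hx⟩ := by
  simp [Equiv.subtypeCongr, hx]

lemma image_eq_iff {α : Type*} [Fintype α] [DecidableEq α] (P W : Finset α) (π : Equiv.Perm α) :
    P.image π = W ↔ ∀ x, x ∈ P ↔ π x ∈ W := by
  constructor
  · intro him x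
    constructor
    · intro hx; rw [← him]; exact mem_image_of_mem π hx
    · intro hx; rw [← him] at hx
      obtain ⟨y, hy, hxy⟩ := mem_image.mp hx
      rwa [← π.injective hxy]
  · intro hmem
    ext w
    rw [mem_image]
    constructor
    · rintro ⟨x, hx, rfl⟩; exact (hmem x).mp hx
    · intro hw
      exact ⟨π.symm w, (hmem (π.symm w)).mpr (by simpa using hw), by simp⟩

lemma card_perm_image {α : Type*} [Fintype α] [DecidableEq α] (P W : Finset α)
    (h : P.card = W.card) :
    (univ.filter fun π : Equiv.Perm α => P.image π = W).card
      = (P.card).factorial * (Fintype.card α - P.card).factorial := by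
  classical
  let E : ({x // x ∈ P} ≃ {x // x ∈ W}) × ({x // ¬ x ∈ P} ≃ {x // ¬ x ∈ W})
      ≃ {π : Equiv.Perm α // P.image π = W} :=
    { toFun := fun pr => ⟨Equiv.subtypeCongr pr.1 pr.2, by
        rw [image_eq_iff]
        intro x
        constructor
        · intro hx; rw [subtypeCongr_apply_mem pr.1 pr.2 x hx]; exact (pr.1 ⟨x, hx⟩).2
        · intro hx
          by_contra hxP
          rw [subtypeCongr_apply_not_mem pr.1 pr.2 x hxP] at hx
          exact (pr.2 ⟨x, hxP⟩).2 hx⟩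
      invFun := fun π =>
        (π.1.subtypeEquiv fun a => (image_eq_iff P W π.1).mp π.2 a,
         π.1.subtypeEquiv fun a => not_iff_not.mpr ((image_eq_iff P W π.1).mp π.2 a))
      left_inv := fun pr => by
        refine Prod.ext (Equiv.ext fun x => Subtype.ext ?_) (Equiv.ext fun x => Subtype.ext ?_)
        · show Equiv.subtypeCongr pr.1 pr.2 x.1 = (pr.1 x).1
          rw [subtypeCongr_apply_mem pr.1 pr.2 x.1 x.2]
        · show Equiv.subtypeCongr pr.1 pr.2 x.1 = (pr.2 x).1
          rw [subtypeCongr_apply_not_mem pr.1 pr.2 x.1 x.2]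
      right_inv := fun π => by
        refine Subtype.ext (Equiv.ext fun x => ?_)
        by_cases hx : x ∈ P
        · rw [subtypeCongr_apply_mem _ _ x hx]; rfl
        · rw [subtypeCongr_apply_not_mem _ _ x hx]; rfl }
  have hcard := Fintype.card_congr E
  rw [Fintype.card_prod] at hcard
  have h1 : Fintype.card ({x // x ∈ P} ≃ {x // x ∈ W}) = (P.card).factorial := by
    rw [Fintype.card_equiv (Fintype.equivOfCardEq (by simp [h]))]
    simp
  have h2 : Fintype.card ({x // ¬ x ∈ P} ≃ {x // ¬ x ∈ W})
      = (Fintype.card α - P.card).factorial := by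
    rw [Fintype.card_equiv (Fintype.equivOfCardEq (by
      rw [Fintype.card_subtype_compl, Fintype.card_subtype_compl]
      simp [h]))]
    rw [Fintype.card_subtype_compl]
    simp
  rw [h1, h2] at hcard
  rw [← Fintype.card_subtype]
  exact hcard.symm

lemma card_subsets_inter {α : Type*} [Fintype α] [DecidableEq α] (V : Finset α) (k r : ℕ)
    (hr : r ≤ k) :
    (((univ : Finset α).powersetCard k).filter fun W => (W ∩ V).card = r).card
      = (V.card.choose r) * ((Vᶜ : Finset α).card.choose (k - r)) := by
  classical
  rw [← Finset.card_powersetCard r V, ← Finset.card_powersetCard (k - r) Vᶜ, ← Finset.card_product]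
  refine Finset.card_bij' (fun W _ => (W ∩ V, W \ V)) (fun pr _ => pr.1 ∪ pr.2) ?_ ?_ ?_ ?_
  · intro W hW
    rw [mem_filter, mem_powersetCard] at hW
    obtain ⟨⟨_, hWcard⟩, hWr⟩ := hW
    rw [mem_product]
    constructor
    · rw [mem_powersetCard]; exact ⟨inter_subset_right, hWr⟩
    · rw [mem_powersetCard]
      constructor
      · intro x hx
        rw [mem_sdiff] at hx
        simpa using hx.2
      · dsimp only
        have := Finset.card_inter_add_card_sdiff W V
        omega
  · intro pr hpr
    rw [mem_product, mem_powersetCard, mem_powersetCard] at hpr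
    obtain ⟨⟨hA, hAcard⟩, hB, hBcard⟩ := hpr
    have hdisj : Disjoint pr.1 pr.2 := by
      rw [Finset.disjoint_left]
      intro x hxA hxB
      have := hB hxB
      rw [Finset.mem_compl] at this
      exact this (hA hxA)
    rw [mem_filter, mem_powersetCard]
    refine ⟨⟨subset_univ _, ?_⟩, ?_⟩
    · rw [Finset.card_union_of_disjoint hdisj]; omega
    · have : (pr.1 ∪ pr.2) ∩ V = pr.1 := by
        ext x
        simp only [mem_inter, mem_union]
        constructor
        · rintro ⟨hx1 | hx2, hxV⟩
          · exact hx1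
          · exact absurd hxV (by simpa using hB hx2)
        · intro hx; exact ⟨Or.inl hx, hA hx⟩
      rw [this, hAcard]
  · intro W hW
    dsimp only
    rw [union_comm]
    exact Finset.sdiff_union_inter W V
  · intro pr hpr
    rw [mem_product, mem_powersetCard, mem_powersetCard] at hpr
    obtain ⟨⟨hA, hAcard⟩, hB, hBcard⟩ := hpr
    have h1 : (pr.1 ∪ pr.2) ∩ V = pr.1 := by
      ext x
      simp only [mem_inter, mem_union]
      constructor
      · rintro ⟨hx1 | hx2, hxV⟩
        · exact hx1
        · exact absurd hxV (by simpa using hB hx2)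
      · intro hx; exact ⟨Or.inl hx, hA hx⟩
    have h2 : (pr.1 ∪ pr.2) \ V = pr.2 := by
      ext x
      simp only [mem_sdiff, mem_union]
      constructor
      · rintro ⟨hx1 | hx2, hxV⟩
        · exact absurd (hA hx1) hxV
        · exact hx2
      · intro hx
        exact ⟨Or.inr hx, by simpa using hB hx⟩
    exact Prod.ext h1 h2

lemma card_filter_lt (N k : ℕ) (h : k ≤ N) :
    ((univ : Finset (Fin N)).filter fun p : Fin N => (p : ℕ) < k).card = k := by
  have : ((univ : Finset (Fin N)).filter fun p : Fin N => (p : ℕ) < k).card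
      = (univ : Finset (Fin k)).card := by
    refine Finset.card_bij' (fun p hp => (⟨p.1, (mem_filter.mp hp).2⟩ : Fin k))
      (fun q _ => (⟨q.1, lt_of_lt_of_le q.2 h⟩ : Fin N)) ?_ ?_ ?_ ?_
    · intro p hp; exact mem_univ _
    · intro q hq
      rw [mem_filter]
      exact ⟨mem_univ _, q.2⟩
    · intro p hp; rfl
    · intro q hq; rfl
  rw [this, card_univ, Fintype.card_fin]

/-- The master count: permutations with given block-intersection number. -/
lemma card_rfiber (n m r : ℕ) (hrm : r ≤ m) (hrn : r ≤ n) :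
    (univ.filter fun π : Equiv.Perm (Fin (n+m)) =>
        ((((univ : Finset (Fin (n+m))).filter fun p : Fin (n+m) => (p:ℕ) < m).image π)
          ∩ ((univ : Finset (Fin (n+m))).filter fun p : Fin (n+m) => (p:ℕ) < n)).card = r).card
      = (Nat.factorial m * Nat.factorial n) * (n.choose r * m.choose r) := by
  classical
  set Pm := (univ : Finset (Fin (n+m))).filter fun p : Fin (n+m) => (p:ℕ) < m with hPm
  set Vn := (univ : Finset (Fin (n+m))).filter fun p : Fin (n+m) => (p:ℕ) < n with hVn
  have hPmcard : Pm.card = m := card_filter_lt (n+m) m (by omega)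
  have hVncard : Vn.card = n := card_filter_lt (n+m) n (by omega)
  set t := ((univ : Finset (Fin (n+m))).powersetCard m).filter fun W => (W ∩ Vn).card = r with ht
  have hmaps : ∀ π : Equiv.Perm (Fin (n+m)),
      π ∈ univ.filter (fun π : Equiv.Perm (Fin (n+m)) => ((Pm.image π) ∩ Vn).card = r) →
      Pm.image π ∈ t := by
    intro π hπ
    rw [mem_filter] at hπ
    rw [ht, mem_filter, mem_powersetCard]
    exact ⟨⟨subset_univ _, by rw [Finset.card_image_of_injective _ π.injective, hPmcard]⟩, hπ.2⟩
  rw [Finset.card_eq_sum_card_fiberwise hmaps]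
  have hfib : ∀ W ∈ t,
      ((univ.filter fun π : Equiv.Perm (Fin (n+m)) => ((Pm.image π) ∩ Vn).card = r).filter
        fun π : Equiv.Perm (Fin (n+m)) => Pm.image ⇑π = W).card = Nat.factorial m * Nat.factorial n := by
    intro W hW
    rw [ht, mem_filter, mem_powersetCard] at hW
    have heq : ((univ.filter fun π : Equiv.Perm (Fin (n+m)) => ((Pm.image π) ∩ Vn).card = r).filter
        fun π : Equiv.Perm (Fin (n+m)) => Pm.image ⇑π = W) = univ.filter fun π : Equiv.Perm (Fin (n+m)) => Pm.image π = W := by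
      ext π
      simp only [mem_filter, mem_univ, true_and]
      constructor
      · rintro ⟨_, h2⟩; exact h2
      · intro h2; exact ⟨by rw [h2]; exact hW.2, h2⟩
    rw [heq, card_perm_image Pm W (by rw [hPmcard, hW.1.2]), hPmcard, Fintype.card_fin,
      show n + m - m = n by omega]
  rw [Finset.sum_congr rfl hfib, Finset.sum_const, smul_eq_mul]
  have htcard : t.card = n.choose r * m.choose r := by
    rw [ht, card_subsets_inter Vn m r hrm, hVncard]
    congr 1
    rw [Finset.card_compl, hVncard, Fintype.card_fin, show n + m - n = m by omega]
    exact Nat.choose_symm hrm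
  rw [htcard]
  ring



def emb1 {n m : ℕ} (i : Fin n) : Fin (n+m) := ⟨i.1, by have := i.2; omega⟩
def emb2 {n m : ℕ} (j : Fin m) : Fin (n+m) := ⟨n + j.1, by have := j.2; omega⟩
def emb3 {n m : ℕ} (j : Fin m) : Fin (n+m) := ⟨j.1, by have := j.2; omega⟩
def emb4 {n m : ℕ} (i : Fin n) : Fin (n+m) := ⟨m + i.1, by have := i.2; omega⟩

/-- All the data needed for the block decomposition of a permutation. -/
structure Ctx (n m r c : ℕ) where
  hrn : r ≤ n
  hrm : r ≤ m
  hc : n + m = 2*r + c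
  π : Equiv.Perm (Fin (n+m))
  S : Finset (Fin m)
  S' : Finset (Fin n)
  e₁ : Fin r ≃ {j : Fin m // j ∈ S}
  e₂ : Fin (m-r) ≃ {j : Fin m // j ∉ S}
  e₃ : Fin (n-r) ≃ {i : Fin n // i ∈ S'}
  e₄ : Fin r ≃ {i : Fin n // i ∉ S'}

variable {n m r c : ℕ}

def Ctx.buildT (C : Ctx n m r c) (w : (Fin c → ℕ) × (Fin r → ℕ) × (Fin r → ℕ)) :
    Fin (n+m) → ℕ := fun p =>
  if hq : (C.π.symm p).1 < m then
    if hj : (⟨(C.π.symm p).1, hq⟩ : Fin m) ∈ C.S then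
      w.2.1 (C.e₁.symm ⟨⟨(C.π.symm p).1, hq⟩, hj⟩)
    else
      w.1 ⟨(n-r) + (C.e₂.symm ⟨⟨(C.π.symm p).1, hq⟩, hj⟩).1, by
        have h1 := (C.e₂.symm ⟨⟨(C.π.symm p).1, hq⟩, hj⟩).2
        have := C.hc; have := C.hrn; omega⟩
  else
    if hi : (⟨(C.π.symm p).1 - m, by have := (C.π.symm p).2; omega⟩ : Fin n) ∈ C.S' then
      w.1 ⟨(C.e₃.symm ⟨⟨(C.π.symm p).1 - m, by have := (C.π.symm p).2; omega⟩, hi⟩).1, by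
        have h1 := (C.e₃.symm ⟨⟨(C.π.symm p).1 - m, by have := (C.π.symm p).2; omega⟩, hi⟩).2
        have := C.hc; have := C.hrn; have := C.hrm; omega⟩
    else
      w.2.2 (C.e₄.symm ⟨⟨(C.π.symm p).1 - m, by have := (C.π.symm p).2; omega⟩, hi⟩)

def Ctx.readT (C : Ctx n m r c) (t : Fin (n+m) → ℕ) :
    (Fin c → ℕ) × (Fin r → ℕ) × (Fin r → ℕ) :=
  (fun k => if hk : k.1 < n - r then t (C.π (emb4 (C.e₃ ⟨k.1, hk⟩).1))
            else t (C.π (emb3 (C.e₂ ⟨k.1 - (n-r), by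
              have := k.2; have := C.hc; have := C.hrn; have := C.hrm; omega⟩).1)),
   fun k => t (C.π (emb3 (C.e₁ k).1)),
   fun k => t (C.π (emb4 (C.e₄ k).1)))

-- evaluation lemmas for buildT
lemma Ctx.buildT_eq3_mem (C : Ctx n m r c) (w) (p : Fin (n+m)) (j : Fin m)
    (hpj : C.π.symm p = emb3 j) (hj : j ∈ C.S) :
    C.buildT w p = w.2.1 (C.e₁.symm ⟨j, hj⟩) := by
  have hp : p = C.π (emb3 j) := by rw [← hpj]; simp
  subst hp
  unfold Ctx.buildT
  simp only [Equiv.symm_apply_apply]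
  have h1 : ((emb3 (n:=n) j : Fin (n+m)) : ℕ) < m := j.2
  rw [dif_pos h1]
  have h2 : (⟨(emb3 (n:=n) j : Fin (n+m)).1, h1⟩ : Fin m) ∈ C.S := hj
  exact dif_pos h2

lemma Ctx.buildT_eq3_not_mem (C : Ctx n m r c) (w) (p : Fin (n+m)) (j : Fin m)
    (hpj : C.π.symm p = emb3 j) (hj : j ∉ C.S) :
    C.buildT w p = w.1 ⟨(n-r) + (C.e₂.symm ⟨j, hj⟩).1, by
      have h1 := (C.e₂.symm ⟨j, hj⟩).2
      have := C.hc; have := C.hrn; omega⟩ := by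
  have hp : p = C.π (emb3 j) := by rw [← hpj]; simp
  subst hp
  unfold Ctx.buildT
  simp only [Equiv.symm_apply_apply]
  have h1 : ((emb3 (n:=n) j : Fin (n+m)) : ℕ) < m := j.2
  rw [dif_pos h1]
  have h2 : (⟨(emb3 (n:=n) j : Fin (n+m)).1, h1⟩ : Fin m) ∉ C.S := hj
  exact dif_neg h2

lemma Ctx.buildT_eq4_mem (C : Ctx n m r c) (w) (p : Fin (n+m)) (i : Fin n)
    (hpi : C.π.symm p = emb4 i) (hi : i ∈ C.S') :
    C.buildT w p = w.1 ⟨(C.e₃.symm ⟨i, hi⟩).1, by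
      have h1 := (C.e₃.symm ⟨i, hi⟩).2
      have := C.hc; have := C.hrn; have := C.hrm; omega⟩ := by
  have hp : p = C.π (emb4 i) := by rw [← hpi]; simp
  subst hp
  unfold Ctx.buildT
  simp only [Equiv.symm_apply_apply]
  have hval : ((emb4 (n:=n) (m:=m) i) : ℕ) = m + i.1 := rfl
  rw [dif_neg (by omega)]
  have hmk : (⟨((emb4 (n:=n) (m:=m) i) : ℕ) - m, by omega⟩ : Fin n) = i :=
    Fin.ext (by show ((emb4 (n:=n) (m:=m) i) : ℕ) - m = i.1; omega)
  simp only [hmk]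
  rw [dif_pos hi]

lemma Ctx.buildT_eq4_not_mem (C : Ctx n m r c) (w) (p : Fin (n+m)) (i : Fin n)
    (hpi : C.π.symm p = emb4 i) (hi : i ∉ C.S') :
    C.buildT w p = w.2.2 (C.e₄.symm ⟨i, hi⟩) := by
  have hp : p = C.π (emb4 i) := by rw [← hpi]; simp
  subst hp
  unfold Ctx.buildT
  simp only [Equiv.symm_apply_apply]
  have hval : ((emb4 (n:=n) (m:=m) i) : ℕ) = m + i.1 := rfl
  rw [dif_neg (by omega)]
  have hmk : (⟨((emb4 (n:=n) (m:=m) i) : ℕ) - m, by omega⟩ : Fin n) = i :=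
    Fin.ext (by show ((emb4 (n:=n) (m:=m) i) : ℕ) - m = i.1; omega)
  simp only [hmk]
  rw [dif_neg hi]

lemma Ctx.readT_buildT (C : Ctx n m r c) (w) : C.readT (C.buildT w) = w := by
  refine Prod.ext (funext fun k => ?_) (Prod.ext (funext fun k => ?_) (funext fun k => ?_))
  · simp only [Ctx.readT]
    by_cases hk : k.1 < n - r
    · rw [dif_pos hk]
      rw [C.buildT_eq4_mem w _ (C.e₃ ⟨k.1, hk⟩).1 (C.π.symm_apply_apply _) (C.e₃ ⟨k.1, hk⟩).2]
      refine congrArg w.1 (Fin.ext ?_)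
      show (C.e₃.symm ⟨(C.e₃ ⟨k.1, hk⟩).1, (C.e₃ ⟨k.1, hk⟩).2⟩).1 = k.1
      rw [Subtype.coe_eta, Equiv.symm_apply_apply]
    · rw [dif_neg hk]
      rw [C.buildT_eq3_not_mem w _ (C.e₂ ⟨k.1 - (n-r), by
          have := k.2; have := C.hc; have := C.hrn; have := C.hrm; omega⟩).1
        (C.π.symm_apply_apply _) (C.e₂ ⟨k.1 - (n-r), by
          have := k.2; have := C.hc; have := C.hrn; have := C.hrm; omega⟩).2]
      refine congrArg w.1 (Fin.ext ?_)
      show (n-r) + (C.e₂.symm ⟨(C.e₂ _).1, (C.e₂ _).2⟩).1 = k.1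
      rw [Subtype.coe_eta, Equiv.symm_apply_apply]
      show (n-r) + (k.1 - (n-r)) = k.1
      omega
  · simp only [Ctx.readT]
    rw [C.buildT_eq3_mem w _ (C.e₁ k).1 (C.π.symm_apply_apply _) (C.e₁ k).2]
    rw [Subtype.coe_eta, Equiv.symm_apply_apply]
  · simp only [Ctx.readT]
    rw [C.buildT_eq4_not_mem w _ (C.e₄ k).1 (C.π.symm_apply_apply _) (C.e₄ k).2]
    rw [Subtype.coe_eta, Equiv.symm_apply_apply]

lemma Ctx.buildT_readT (C : Ctx n m r c) (t) : C.buildT (C.readT t) = t := by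
  funext p
  by_cases hq : (C.π.symm p).1 < m
  · have hpj : C.π.symm p = emb3 (⟨(C.π.symm p).1, hq⟩ : Fin m) := Fin.ext rfl
    have hp : C.π (emb3 (⟨(C.π.symm p).1, hq⟩ : Fin m)) = p := by rw [← hpj]; simp
    by_cases hj : (⟨(C.π.symm p).1, hq⟩ : Fin m) ∈ C.S
    · rw [C.buildT_eq3_mem _ p _ hpj hj]
      show t (C.π (emb3 (C.e₁ (C.e₁.symm ⟨_, hj⟩)).1)) = t p
      rw [Equiv.apply_symm_apply]
      exact congrArg t hp
    · rw [C.buildT_eq3_not_mem _ p _ hpj hj]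
      simp only [Ctx.readT]
      rw [dif_neg (by omega)]
      have hix : ∀ h, (⟨(n-r) + (C.e₂.symm ⟨⟨(C.π.symm p).1, hq⟩, hj⟩).1 - (n-r), h⟩ :
          Fin (m-r)) = C.e₂.symm ⟨⟨(C.π.symm p).1, hq⟩, hj⟩ :=
        fun h => Fin.ext (by
          show (n-r) + (C.e₂.symm ⟨⟨(C.π.symm p).1, hq⟩, hj⟩).1 - (n-r) = _
          omega)
      simp only [hix, Equiv.apply_symm_apply]
      exact congrArg t hp
  · have hpi : C.π.symm p = emb4 (⟨(C.π.symm p).1 - m, by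
        have := (C.π.symm p).2; omega⟩ : Fin n) := Fin.ext (by
      show (C.π.symm p).1 = m + ((C.π.symm p).1 - m)
      omega)
    have hp : C.π (emb4 (⟨(C.π.symm p).1 - m, by
        have := (C.π.symm p).2; omega⟩ : Fin n)) = p := by rw [← hpi]; simp
    by_cases hi : (⟨(C.π.symm p).1 - m, by have := (C.π.symm p).2; omega⟩ : Fin n) ∈ C.S'
    · rw [C.buildT_eq4_mem _ p _ hpi hi]
      simp only [Ctx.readT]
      rw [dif_pos ((C.e₃.symm ⟨_, hi⟩).2)]
      simp only [Fin.eta, Equiv.apply_symm_apply]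
      exact congrArg t hp
    · rw [C.buildT_eq4_not_mem _ p _ hpi hi]
      show t (C.π (emb4 (C.e₄ (C.e₄.symm ⟨_, hi⟩)).1)) = t p
      rw [Equiv.apply_symm_apply]
      exact congrArg t hp

/-- The bijection between block data and full kernels. -/
def Ctx.equiv (C : Ctx n m r c) : ((Fin c → ℕ) × (Fin r → ℕ) × (Fin r → ℕ)) ≃ (Fin (n+m) → ℕ) :=
  ⟨C.buildT, C.readT, C.readT_buildT, C.buildT_readT⟩

-- membership helpers
lemma Ctx.mem_S_of (C : Ctx n m r c) (hS : ∀ j : Fin m, j ∈ C.S ↔ ((C.π (emb3 j)) : ℕ) < n)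
    {p : Fin (n+m)} (hpn : (p : ℕ) < n) (hq : (C.π.symm p).1 < m) :
    (⟨(C.π.symm p).1, hq⟩ : Fin m) ∈ C.S := by
  rw [hS, show emb3 (⟨(C.π.symm p).1, hq⟩ : Fin m) = C.π.symm p from Fin.ext rfl,
    Equiv.apply_symm_apply]
  exact hpn

lemma Ctx.not_mem_S_of (C : Ctx n m r c) (hS : ∀ j : Fin m, j ∈ C.S ↔ ((C.π (emb3 j)) : ℕ) < n)
    {p : Fin (n+m)} (hpn : ¬ (p : ℕ) < n) (hq : (C.π.symm p).1 < m) :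
    (⟨(C.π.symm p).1, hq⟩ : Fin m) ∉ C.S := by
  rw [hS, show emb3 (⟨(C.π.symm p).1, hq⟩ : Fin m) = C.π.symm p from Fin.ext rfl,
    Equiv.apply_symm_apply]
  exact hpn

lemma Ctx.mem_S'_of (C : Ctx n m r c) (hS' : ∀ i : Fin n, i ∈ C.S' ↔ ((C.π (emb4 i)) : ℕ) < n)
    {p : Fin (n+m)} (hpn : (p : ℕ) < n) (hq : ¬ (C.π.symm p).1 < m) :
    (⟨(C.π.symm p).1 - m, by have := (C.π.symm p).2; omega⟩ : Fin n) ∈ C.S' := by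
  rw [hS', show emb4 (⟨(C.π.symm p).1 - m, by have := (C.π.symm p).2; omega⟩ : Fin n)
      = C.π.symm p from Fin.ext (by
    show m + ((C.π.symm p).1 - m) = (C.π.symm p).1
    omega), Equiv.apply_symm_apply]
  exact hpn

lemma Ctx.not_mem_S'_of (C : Ctx n m r c) (hS' : ∀ i : Fin n, i ∈ C.S' ↔ ((C.π (emb4 i)) : ℕ) < n)
    {p : Fin (n+m)} (hpn : ¬ (p : ℕ) < n) (hq : ¬ (C.π.symm p).1 < m) :
    (⟨(C.π.symm p).1 - m, by have := (C.π.symm p).2; omega⟩ : Fin n) ∉ C.S' := by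
  rw [hS', show emb4 (⟨(C.π.symm p).1 - m, by have := (C.π.symm p).2; omega⟩ : Fin n)
      = C.π.symm p from Fin.ext (by
    show m + ((C.π.symm p).1 - m) = (C.π.symm p).1
    omega), Equiv.apply_symm_apply]
  exact hpn

-- the contraction argument kernels
def Ctx.A1 (C : Ctx n m r c) (w : (Fin c → ℕ) × (Fin r → ℕ) × (Fin r → ℕ)) : Fin n → ℕ :=
  fun i => if hi : i.1 < r then w.2.1 ⟨i.1, hi⟩
    else w.1 ⟨i.1 - r, by have := i.2; have := C.hc; have := C.hrn; have := C.hrm; omega⟩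

def Ctx.A3 (C : Ctx n m r c) (w : (Fin c → ℕ) × (Fin r → ℕ) × (Fin r → ℕ)) : Fin m → ℕ :=
  fun i => if hi : i.1 < r then w.2.1 ⟨i.1, hi⟩
    else w.1 ⟨(n-r) + (i.1 - r), by have := i.2; have := C.hc; have := C.hrn; have := C.hrm; omega⟩

def Ctx.A4 (C : Ctx n m r c) (w : (Fin c → ℕ) × (Fin r → ℕ) × (Fin r → ℕ)) : Fin n → ℕ :=
  fun i => if hi : i.1 < r then w.2.2 ⟨i.1, hi⟩
    else w.1 ⟨i.1 - r, by have := i.2; have := C.hc; have := C.hrn; have := C.hrm; omega⟩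

def Ctx.A2 (C : Ctx n m r c) (w : (Fin c → ℕ) × (Fin r → ℕ) × (Fin r → ℕ)) : Fin m → ℕ :=
  fun i => if hi : i.1 < r then w.2.2 ⟨i.1, hi⟩
    else w.1 ⟨(n-r) + (i.1 - r), by have := i.2; have := C.hc; have := C.hrn; have := C.hrm; omega⟩

-- the four index rearrangements
def Ctx.g3 (C : Ctx n m r c) (j : Fin m) : Fin m :=
  if hj : j ∈ C.S then ⟨(C.e₁.symm ⟨j, hj⟩).1, by
      have := (C.e₁.symm ⟨j, hj⟩).2; have := C.hrm; omega⟩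
  else ⟨r + (C.e₂.symm ⟨j, hj⟩).1, by
      have := (C.e₂.symm ⟨j, hj⟩).2; have := C.hrm; omega⟩

def Ctx.g4 (C : Ctx n m r c) (i : Fin n) : Fin n :=
  if hi : i ∈ C.S' then ⟨r + (C.e₃.symm ⟨i, hi⟩).1, by
      have := (C.e₃.symm ⟨i, hi⟩).2; have := C.hrn; omega⟩
  else ⟨(C.e₄.symm ⟨i, hi⟩).1, by
      have := (C.e₄.symm ⟨i, hi⟩).2; have := C.hrn; omega⟩

def Ctx.g1 (C : Ctx n m r c) (hS : ∀ j : Fin m, j ∈ C.S ↔ ((C.π (emb3 j)) : ℕ) < n)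
    (hS' : ∀ i : Fin n, i ∈ C.S' ↔ ((C.π (emb4 i)) : ℕ) < n) (i : Fin n) : Fin n :=
  if hq : (C.π.symm (emb1 i)).1 < m then
    ⟨(C.e₁.symm ⟨⟨(C.π.symm (emb1 i)).1, hq⟩, C.mem_S_of hS i.2 hq⟩).1, by
      have := (C.e₁.symm ⟨⟨(C.π.symm (emb1 i)).1, hq⟩, C.mem_S_of hS i.2 hq⟩).2
      have := C.hrn; omega⟩
  else
    ⟨r + (C.e₃.symm ⟨⟨(C.π.symm (emb1 i)).1 - m, by have := (C.π.symm (emb1 i)).2; omega⟩,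
        C.mem_S'_of hS' i.2 hq⟩).1, by
      have := (C.e₃.symm ⟨⟨(C.π.symm (emb1 i)).1 - m, by have := (C.π.symm (emb1 i)).2; omega⟩,
        C.mem_S'_of hS' i.2 hq⟩).2
      have := C.hrn; omega⟩

def Ctx.g2 (C : Ctx n m r c) (hS : ∀ j : Fin m, j ∈ C.S ↔ ((C.π (emb3 j)) : ℕ) < n)
    (hS' : ∀ i : Fin n, i ∈ C.S' ↔ ((C.π (emb4 i)) : ℕ) < n) (j : Fin m) : Fin m :=
  if hq : (C.π.symm (emb2 j)).1 < m then
    ⟨r + (C.e₂.symm ⟨⟨(C.π.symm (emb2 j)).1, hq⟩,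
        C.not_mem_S_of hS (by show ¬ n + j.1 < n; omega) hq⟩).1, by
      have := (C.e₂.symm ⟨⟨(C.π.symm (emb2 j)).1, hq⟩,
        C.not_mem_S_of hS (by show ¬ n + j.1 < n; omega) hq⟩).2
      have := C.hrm; omega⟩
  else
    ⟨(C.e₄.symm ⟨⟨(C.π.symm (emb2 j)).1 - m, by have := (C.π.symm (emb2 j)).2; omega⟩,
        C.not_mem_S'_of hS' (by show ¬ n + j.1 < n; omega) hq⟩).1, by
      have := (C.e₄.symm ⟨⟨(C.π.symm (emb2 j)).1 - m, by have := (C.π.symm (emb2 j)).2; omega⟩,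
        C.not_mem_S'_of hS' (by show ¬ n + j.1 < n; omega) hq⟩).2
      have := C.hrm; omega⟩

-- pointwise argument identifications
lemma Ctx.arg3 (C : Ctx n m r c) (w) (j : Fin m) :
    C.buildT w (C.π (emb3 j)) = C.A3 w (C.g3 j) := by
  by_cases hj : j ∈ C.S
  · rw [C.buildT_eq3_mem w _ j (C.π.symm_apply_apply _) hj]
    unfold Ctx.g3 Ctx.A3
    rw [dif_pos hj]
    dsimp only
    rw [dif_pos (C.e₁.symm ⟨j, hj⟩).2]
  · rw [C.buildT_eq3_not_mem w _ j (C.π.symm_apply_apply _) hj]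
    unfold Ctx.g3 Ctx.A3
    rw [dif_neg hj]
    dsimp only
    rw [dif_neg (by omega)]
    refine congrArg w.1 (Fin.ext ?_)
    show (n-r) + (C.e₂.symm ⟨j, hj⟩).1 = (n-r) + (r + (C.e₂.symm ⟨j, hj⟩).1 - r)
    omega

lemma Ctx.arg4 (C : Ctx n m r c) (w) (i : Fin n) :
    C.buildT w (C.π (emb4 i)) = C.A4 w (C.g4 i) := by
  by_cases hi : i ∈ C.S'
  · rw [C.buildT_eq4_mem w _ i (C.π.symm_apply_apply _) hi]
    unfold Ctx.g4 Ctx.A4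
    rw [dif_pos hi]
    dsimp only
    rw [dif_neg (by omega)]
    refine congrArg w.1 (Fin.ext ?_)
    show (C.e₃.symm ⟨i, hi⟩).1 = r + (C.e₃.symm ⟨i, hi⟩).1 - r
    omega
  · rw [C.buildT_eq4_not_mem w _ i (C.π.symm_apply_apply _) hi]
    unfold Ctx.g4 Ctx.A4
    rw [dif_neg hi]
    dsimp only
    rw [dif_pos (C.e₄.symm ⟨i, hi⟩).2]

set_option maxHeartbeats 1000000 in
lemma Ctx.arg1 (C : Ctx n m r c) (hS : ∀ j : Fin m, j ∈ C.S ↔ ((C.π (emb3 j)) : ℕ) < n)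
    (hS' : ∀ i : Fin n, i ∈ C.S' ↔ ((C.π (emb4 i)) : ℕ) < n) (w) (i : Fin n) :
    C.buildT w (emb1 i) = C.A1 w (C.g1 hS hS' i) := by
  by_cases hq : (C.π.symm (emb1 i)).1 < m
  · rw [C.buildT_eq3_mem w (emb1 i) ⟨(C.π.symm (emb1 i)).1, hq⟩ (Fin.ext rfl)
      (C.mem_S_of hS i.2 hq)]
    unfold Ctx.g1 Ctx.A1
    rw [dif_pos hq]
    dsimp only
    rw [dif_pos (C.e₁.symm ⟨⟨(C.π.symm (emb1 i)).1, hq⟩, C.mem_S_of hS i.2 hq⟩).2]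
  · rw [C.buildT_eq4_mem w (emb1 i)
      ⟨(C.π.symm (emb1 i)).1 - m, by have := (C.π.symm (emb1 i)).2; omega⟩
      (Fin.ext (by show (C.π.symm (emb1 i)).1 = m + ((C.π.symm (emb1 i)).1 - m); omega))
      (C.mem_S'_of hS' i.2 hq)]
    unfold Ctx.g1 Ctx.A1
    rw [dif_neg hq]
    dsimp only
    rw [dif_neg (by omega)]
    refine congrArg w.1 (Fin.ext ?_)
    show (C.e₃.symm ⟨⟨(C.π.symm (emb1 i)).1 - m, by have := (C.π.symm (emb1 i)).2; omega⟩,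
      C.mem_S'_of hS' i.2 hq⟩).1
      = r + (C.e₃.symm ⟨⟨(C.π.symm (emb1 i)).1 - m, by have := (C.π.symm (emb1 i)).2; omega⟩,
      C.mem_S'_of hS' i.2 hq⟩).1 - r
    omega

set_option maxHeartbeats 1000000 in
lemma Ctx.arg2 (C : Ctx n m r c) (hS : ∀ j : Fin m, j ∈ C.S ↔ ((C.π (emb3 j)) : ℕ) < n)
    (hS' : ∀ i : Fin n, i ∈ C.S' ↔ ((C.π (emb4 i)) : ℕ) < n) (w) (j : Fin m) :
    C.buildT w (emb2 j) = C.A2 w (C.g2 hS hS' j) := by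
  by_cases hq : (C.π.symm (emb2 j)).1 < m
  · rw [C.buildT_eq3_not_mem w (emb2 j) ⟨(C.π.symm (emb2 j)).1, hq⟩ (Fin.ext rfl)
      (C.not_mem_S_of hS (by show ¬ n + j.1 < n; omega) hq)]
    unfold Ctx.g2 Ctx.A2
    rw [dif_pos hq]
    dsimp only
    rw [dif_neg (by omega)]
    refine congrArg w.1 (Fin.ext ?_)
    show (n-r) + (C.e₂.symm ⟨⟨(C.π.symm (emb2 j)).1, hq⟩,
      C.not_mem_S_of hS (by show ¬ n + j.1 < n; omega) hq⟩).1
      = (n-r) + (r + (C.e₂.symm ⟨⟨(C.π.symm (emb2 j)).1, hq⟩,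
      C.not_mem_S_of hS (by show ¬ n + j.1 < n; omega) hq⟩).1 - r)
    omega
  · rw [C.buildT_eq4_not_mem w (emb2 j)
      ⟨(C.π.symm (emb2 j)).1 - m, by have := (C.π.symm (emb2 j)).2; omega⟩
      (Fin.ext (by show (C.π.symm (emb2 j)).1 = m + ((C.π.symm (emb2 j)).1 - m); omega))
      (C.not_mem_S'_of hS' (by show ¬ n + j.1 < n; omega) hq)]
    unfold Ctx.g2 Ctx.A2
    rw [dif_neg hq]
    dsimp only
    rw [dif_pos (C.e₄.symm ⟨⟨(C.π.symm (emb2 j)).1 - m, by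
        have := (C.π.symm (emb2 j)).2; omega⟩,
        C.not_mem_S'_of hS' (by show ¬ n + j.1 < n; omega) hq⟩).2]

-- injectivity of the rearrangements
lemma Ctx.g3_inj (C : Ctx n m r c) : Function.Injective C.g3 := by
  intro j j' h
  unfold Ctx.g3 at h
  by_cases hj : j ∈ C.S <;> by_cases hj' : j' ∈ C.S
  · rw [dif_pos hj, dif_pos hj', Fin.mk.injEq] at h
    have := C.e₁.symm.injective (Fin.ext h)
    exact Subtype.mk_eq_mk.mp this
  · rw [dif_pos hj, dif_neg hj', Fin.mk.injEq] at h
    have h1 := (C.e₁.symm ⟨j, hj⟩).2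
    omega
  · rw [dif_neg hj, dif_pos hj', Fin.mk.injEq] at h
    have h1 := (C.e₁.symm ⟨j', hj'⟩).2
    omega
  · rw [dif_neg hj, dif_neg hj', Fin.mk.injEq] at h
    have h2 : (C.e₂.symm ⟨j, hj⟩).1 = (C.e₂.symm ⟨j', hj'⟩).1 := by omega
    have := C.e₂.symm.injective (Fin.ext h2)
    exact Subtype.mk_eq_mk.mp this

lemma Ctx.g4_inj (C : Ctx n m r c) : Function.Injective C.g4 := by
  intro i i' h
  unfold Ctx.g4 at h
  by_cases hi : i ∈ C.S' <;> by_cases hi' : i' ∈ C.S'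
  · rw [dif_pos hi, dif_pos hi', Fin.mk.injEq] at h
    have h2 : (C.e₃.symm ⟨i, hi⟩).1 = (C.e₃.symm ⟨i', hi'⟩).1 := by omega
    have := C.e₃.symm.injective (Fin.ext h2)
    exact Subtype.mk_eq_mk.mp this
  · rw [dif_pos hi, dif_neg hi', Fin.mk.injEq] at h
    have h1 := (C.e₄.symm ⟨i', hi'⟩).2
    omega
  · rw [dif_neg hi, dif_pos hi', Fin.mk.injEq] at h
    have h1 := (C.e₄.symm ⟨i, hi⟩).2
    omega
  · rw [dif_neg hi, dif_neg hi', Fin.mk.injEq] at h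
    have := C.e₄.symm.injective (Fin.ext h)
    exact Subtype.mk_eq_mk.mp this

lemma Ctx.g1_inj (C : Ctx n m r c) (hS : ∀ j : Fin m, j ∈ C.S ↔ ((C.π (emb3 j)) : ℕ) < n)
    (hS' : ∀ i : Fin n, i ∈ C.S' ↔ ((C.π (emb4 i)) : ℕ) < n) :
    Function.Injective (C.g1 hS hS') := by
  intro i i' h
  unfold Ctx.g1 at h
  have hback : C.π.symm (emb1 i) = C.π.symm (emb1 i') → i = i' := by
    intro hh
    have := C.π.symm.injective hh
    exact Fin.ext (by
      have := congrArg Fin.val this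
      simpa [emb1] using this)
  by_cases hq : (C.π.symm (emb1 i)).1 < m <;> by_cases hq' : (C.π.symm (emb1 i')).1 < m
  · rw [dif_pos hq, dif_pos hq', Fin.mk.injEq] at h
    have := C.e₁.symm.injective (Fin.ext h)
    have h2 := Subtype.mk_eq_mk.mp this
    rw [Fin.mk.injEq] at h2
    exact hback (Fin.ext h2)
  · rw [dif_pos hq, dif_neg hq', Fin.mk.injEq] at h
    have h1 := (C.e₁.symm ⟨⟨(C.π.symm (emb1 i)).1, hq⟩, C.mem_S_of hS i.2 hq⟩).2
    omega
  · rw [dif_neg hq, dif_pos hq', Fin.mk.injEq] at h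
    have h1 := (C.e₁.symm ⟨⟨(C.π.symm (emb1 i')).1, hq'⟩, C.mem_S_of hS i'.2 hq'⟩).2
    omega
  · rw [dif_neg hq, dif_neg hq', Fin.mk.injEq] at h
    have h2 : (C.e₃.symm ⟨⟨(C.π.symm (emb1 i)).1 - m, by have := (C.π.symm (emb1 i)).2; omega⟩,
        C.mem_S'_of hS' i.2 hq⟩).1
        = (C.e₃.symm ⟨⟨(C.π.symm (emb1 i')).1 - m, by have := (C.π.symm (emb1 i')).2; omega⟩,
        C.mem_S'_of hS' i'.2 hq'⟩).1 := by omega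
    have := C.e₃.symm.injective (Fin.ext h2)
    have h3 := Subtype.mk_eq_mk.mp this
    rw [Fin.mk.injEq] at h3
    exact hback (Fin.ext (by omega))

lemma Ctx.g2_inj (C : Ctx n m r c) (hS : ∀ j : Fin m, j ∈ C.S ↔ ((C.π (emb3 j)) : ℕ) < n)
    (hS' : ∀ i : Fin n, i ∈ C.S' ↔ ((C.π (emb4 i)) : ℕ) < n) :
    Function.Injective (C.g2 hS hS') := by
  intro j j' h
  unfold Ctx.g2 at h
  have hback : C.π.symm (emb2 j) = C.π.symm (emb2 j') → j = j' := by
    intro hh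
    have := C.π.symm.injective hh
    exact Fin.ext (by
      have := congrArg Fin.val this
      simp only [emb2] at this
      omega)
  by_cases hq : (C.π.symm (emb2 j)).1 < m <;> by_cases hq' : (C.π.symm (emb2 j')).1 < m
  · rw [dif_pos hq, dif_pos hq', Fin.mk.injEq] at h
    have h2 : (C.e₂.symm ⟨⟨(C.π.symm (emb2 j)).1, hq⟩,
        C.not_mem_S_of hS (by show ¬ n + j.1 < n; omega) hq⟩).1
        = (C.e₂.symm ⟨⟨(C.π.symm (emb2 j')).1, hq'⟩,
        C.not_mem_S_of hS (by show ¬ n + j'.1 < n; omega) hq'⟩).1 := by omega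
    have := C.e₂.symm.injective (Fin.ext h2)
    have h3 := Subtype.mk_eq_mk.mp this
    rw [Fin.mk.injEq] at h3
    exact hback (Fin.ext h3)
  · rw [dif_pos hq, dif_neg hq', Fin.mk.injEq] at h
    have h1 := (C.e₄.symm ⟨⟨(C.π.symm (emb2 j')).1 - m, by
        have := (C.π.symm (emb2 j')).2; omega⟩,
        C.not_mem_S'_of hS' (by show ¬ n + j'.1 < n; omega) hq'⟩).2
    omega
  · rw [dif_neg hq, dif_pos hq', Fin.mk.injEq] at h
    have h1 := (C.e₄.symm ⟨⟨(C.π.symm (emb2 j)).1 - m, by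
        have := (C.π.symm (emb2 j)).2; omega⟩,
        C.not_mem_S'_of hS' (by show ¬ n + j.1 < n; omega) hq⟩).2
    omega
  · rw [dif_neg hq, dif_neg hq', Fin.mk.injEq] at h
    have := C.e₄.symm.injective (Fin.ext h)
    have h3 := Subtype.mk_eq_mk.mp this
    rw [Fin.mk.injEq] at h3
    exact hback (Fin.ext (by omega))

lemma IsSym.comp_eq {k : ℕ} {f : (Fin k → ℕ) → ℝ} (hf : IsSym f) {a b : Fin k → ℕ}
    (g : Fin k → Fin k) (hg : Function.Injective g) (hab : ∀ i, a i = b (g i)) : f a = f b := by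
  have hbij := (Finite.injective_iff_bijective).mp hg
  have : a = b ∘ (Equiv.ofBijective g hbij) := funext fun i => hab i
  rw [this]
  exact hf (Equiv.ofBijective g hbij) b

/-- The key identity: the inner product against a permuted tensor is the
inner product of contractions. -/
lemma Ctx.key (C : Ctx n m r c)
    (hS : ∀ j : Fin m, j ∈ C.S ↔ ((C.π (emb3 j)) : ℕ) < n)
    (hS' : ∀ i : Fin n, i ∈ C.S' ↔ ((C.π (emb4 i)) : ℕ) < n)
    {f₁ f₄ : (Fin n → ℕ) → ℝ} {f₂ f₃ : (Fin m → ℕ) → ℝ}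
    (h1 : IsSym f₁) (h4 : IsSym f₄) (h2 : IsSym f₂) (h3 : IsSym f₃)
    (hsum : Summable fun t : Fin (n+m) → ℕ => Ften f₁ f₂ t * Gten f₃ f₄ (t ∘ ⇑C.π)) :
    ∑' t : Fin (n+m) → ℕ, Ften f₁ f₂ t * Gten f₃ f₄ (t ∘ ⇑C.π)
      = ∑' s : Fin c → ℕ,
          (∑' u : Fin r → ℕ, f₁ (C.A1 (s, u, u)) * f₃ (C.A3 (s, u, u))) *
          (∑' v : Fin r → ℕ, f₄ (C.A4 (s, v, v)) * f₂ (C.A2 (s, v, v))) := by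
  have hpoint : ∀ w : (Fin c → ℕ) × (Fin r → ℕ) × (Fin r → ℕ),
      Ften f₁ f₂ (C.buildT w) * Gten f₃ f₄ (C.buildT w ∘ ⇑C.π)
        = (f₁ (C.A1 (w.1, w.2.1, w.2.1)) * f₃ (C.A3 (w.1, w.2.1, w.2.1)))
          * (f₄ (C.A4 (w.1, w.2.2, w.2.2)) * f₂ (C.A2 (w.1, w.2.2, w.2.2))) := by
    intro w
    have e1 : f₁ (fun i => C.buildT w (emb1 i)) = f₁ (C.A1 w) :=
      IsSym.comp_eq h1 (C.g1 hS hS') (C.g1_inj hS hS') (fun i => C.arg1 hS hS' w i)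
    have e2 : f₂ (fun j => C.buildT w (emb2 j)) = f₂ (C.A2 w) :=
      IsSym.comp_eq h2 (C.g2 hS hS') (C.g2_inj hS hS') (fun j => C.arg2 hS hS' w j)
    have e3 : f₃ (fun j => C.buildT w (C.π (emb3 j))) = f₃ (C.A3 w) :=
      IsSym.comp_eq h3 C.g3 C.g3_inj (fun j => C.arg3 w j)
    have e4 : f₄ (fun i => C.buildT w (C.π (emb4 i))) = f₄ (C.A4 w) :=
      IsSym.comp_eq h4 C.g4 C.g4_inj (fun i => C.arg4 w i)
    show (f₁ (fun i => C.buildT w (emb1 i)) * f₂ (fun j => C.buildT w (emb2 j)))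
        * (f₃ (fun j => C.buildT w (C.π (emb3 j))) * f₄ (fun i => C.buildT w (C.π (emb4 i)))) = _
    rw [e1, e2, e3, e4]
    show f₁ (C.A1 w) * f₂ (C.A2 w) * (f₃ (C.A3 w) * f₄ (C.A4 w))
      = f₁ (C.A1 w) * f₃ (C.A3 w) * (f₄ (C.A4 w) * f₂ (C.A2 w))
    ring
  have hsum2 : Summable (fun w : (Fin c → ℕ) × (Fin r → ℕ) × (Fin r → ℕ) =>
      (f₁ (C.A1 (w.1, w.2.1, w.2.1)) * f₃ (C.A3 (w.1, w.2.1, w.2.1)))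
        * (f₄ (C.A4 (w.1, w.2.2, w.2.2)) * f₂ (C.A2 (w.1, w.2.2, w.2.2)))) := by
    have h0 := (C.equiv.summable_iff
      (f := fun t => Ften f₁ f₂ t * Gten f₃ f₄ (t ∘ ⇑C.π))).2 hsum
    exact h0.congr (fun w => hpoint w)
  calc ∑' t : Fin (n+m) → ℕ, Ften f₁ f₂ t * Gten f₃ f₄ (t ∘ ⇑C.π)
      = ∑' w : (Fin c → ℕ) × (Fin r → ℕ) × (Fin r → ℕ),
          Ften f₁ f₂ (C.equiv w) * Gten f₃ f₄ (C.equiv w ∘ ⇑C.π) :=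
        (C.equiv.tsum_eq (fun t => Ften f₁ f₂ t * Gten f₃ f₄ (t ∘ ⇑C.π))).symm
    _ = ∑' w : (Fin c → ℕ) × (Fin r → ℕ) × (Fin r → ℕ),
          (f₁ (C.A1 (w.1, w.2.1, w.2.1)) * f₃ (C.A3 (w.1, w.2.1, w.2.1)))
            * (f₄ (C.A4 (w.1, w.2.2, w.2.2)) * f₂ (C.A2 (w.1, w.2.2, w.2.2))) :=
        tsum_congr fun w => hpoint w
    _ = ∑' s : Fin c → ℕ, ∑' uv : (Fin r → ℕ) × (Fin r → ℕ),
          (f₁ (C.A1 (s, uv.1, uv.1)) * f₃ (C.A3 (s, uv.1, uv.1)))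
            * (f₄ (C.A4 (s, uv.2, uv.2)) * f₂ (C.A2 (s, uv.2, uv.2))) :=
        Summable.tsum_prod' hsum2 (fun s => hsum2.prod_factor s)
    _ = ∑' s : Fin c → ℕ,
          (∑' u : Fin r → ℕ, f₁ (C.A1 (s, u, u)) * f₃ (C.A3 (s, u, u))) *
          (∑' v : Fin r → ℕ, f₄ (C.A4 (s, v, v)) * f₂ (C.A2 (s, v, v))) := by
        refine tsum_congr fun s => ?_
        calc ∑' uv : (Fin r → ℕ) × (Fin r → ℕ),
              (f₁ (C.A1 (s, uv.1, uv.1)) * f₃ (C.A3 (s, uv.1, uv.1)))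
                * (f₄ (C.A4 (s, uv.2, uv.2)) * f₂ (C.A2 (s, uv.2, uv.2)))
            = ∑' u : Fin r → ℕ, ∑' v : Fin r → ℕ,
                (f₁ (C.A1 (s, u, u)) * f₃ (C.A3 (s, u, u)))
                  * (f₄ (C.A4 (s, v, v)) * f₂ (C.A2 (s, v, v))) :=
              Summable.tsum_prod' (hsum2.prod_factor s) (fun u => (hsum2.prod_factor s).prod_factor u)
          _ = ∑' u : Fin r → ℕ, (f₁ (C.A1 (s, u, u)) * f₃ (C.A3 (s, u, u)))
                * ∑' v : Fin r → ℕ, (f₄ (C.A4 (s, v, v)) * f₂ (C.A2 (s, v, v))) :=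
              tsum_congr fun u => tsum_mul_left
          _ = (∑' u : Fin r → ℕ, f₁ (C.A1 (s, u, u)) * f₃ (C.A3 (s, u, u))) *
              (∑' v : Fin r → ℕ, f₄ (C.A4 (s, v, v)) * f₂ (C.A2 (s, v, v))) :=
              tsum_mul_right

variable {n m : ℕ}

/-- the intersection number of a permutation -/
def rOf (n m : ℕ) (π : Equiv.Perm (Fin (n+m))) : ℕ :=
  ((((univ : Finset (Fin (n+m))).filter fun p : Fin (n+m) => (p:ℕ) < m).image ⇑π)
    ∩ ((univ : Finset (Fin (n+m))).filter fun p : Fin (n+m) => (p:ℕ) < n)).card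

lemma emb3_inj (π : Equiv.Perm (Fin (n+m))) :
    Function.Injective fun j : Fin m => π (emb3 j) := by
  intro j j' h
  have := congrArg Fin.val (π.injective h)
  exact Fin.ext this

lemma emb4_inj (π : Equiv.Perm (Fin (n+m))) :
    Function.Injective fun i : Fin n => π (emb4 i) := by
  intro i i' h
  have := congrArg Fin.val (π.injective h)
  simp only [emb4] at this
  exact Fin.ext (by omega)

lemma S_card_eq_rOf (π : Equiv.Perm (Fin (n+m))) :
    ((univ : Finset (Fin m)).filter fun j : Fin m => ((π (emb3 j)) : ℕ) < n).card = rOf n m π := by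
  unfold rOf
  have himg : (((univ : Finset (Fin (n+m))).filter fun p : Fin (n+m) => (p:ℕ) < m).image ⇑π)
      ∩ ((univ : Finset (Fin (n+m))).filter fun p : Fin (n+m) => (p:ℕ) < n)
      = ((univ : Finset (Fin m)).filter fun j : Fin m => ((π (emb3 j)) : ℕ) < n).image
          (fun j : Fin m => π (emb3 j)) := by
    ext p
    simp only [mem_inter, mem_image, mem_filter, mem_univ, true_and]
    constructor
    · rintro ⟨⟨q, hq, rfl⟩, hp⟩
      refine ⟨⟨q.1, hq⟩, ?_, ?_⟩ <;>
        rw [show emb3 (⟨q.1, hq⟩ : Fin m) = q from Fin.ext rfl]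
      exact hp
    · rintro ⟨j, hj, rfl⟩
      exact ⟨⟨emb3 j, j.2, rfl⟩, hj⟩
  rw [himg, Finset.card_image_of_injective _ (emb3_inj π)]

lemma card_filter_lt' (N k : ℕ) (h : k ≤ N) :
    ((univ : Finset (Fin N)).filter fun p : Fin N => (p : ℕ) < k).card = k := by
  have : ((univ : Finset (Fin N)).filter fun p : Fin N => (p : ℕ) < k).card
      = (univ : Finset (Fin k)).card := by
    refine Finset.card_bij' (fun p hp => (⟨p.1, (mem_filter.mp hp).2⟩ : Fin k))
      (fun q _ => (⟨q.1, lt_of_lt_of_le q.2 h⟩ : Fin N)) ?_ ?_ ?_ ?_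
    · intro p hp; exact mem_univ _
    · intro q hq
      rw [mem_filter]
      exact ⟨mem_univ _, q.2⟩
    · intro p hp; rfl
    · intro q hq; rfl
  rw [this, card_univ, Fintype.card_fin]

lemma S_S'_cards (π : Equiv.Perm (Fin (n+m))) :
    ((univ : Finset (Fin m)).filter fun j : Fin m => ((π (emb3 j)) : ℕ) < n).card
      + ((univ : Finset (Fin n)).filter fun i : Fin n => ((π (emb4 i)) : ℕ) < n).card = n := by
  classical
  have himg : ((((univ : Finset (Fin m)).filter fun j : Fin m => ((π (emb3 j)) : ℕ) < n).image
        (fun j : Fin m => π (emb3 j)))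
      ∪ (((univ : Finset (Fin n)).filter fun i : Fin n => ((π (emb4 i)) : ℕ) < n).image
        (fun i : Fin n => π (emb4 i))))
      = (univ : Finset (Fin (n+m))).filter (fun p : Fin (n+m) => (p:ℕ) < n) := by
    ext p
    simp only [mem_union, mem_image, mem_filter, mem_univ, true_and]
    constructor
    · rintro (⟨j, hj, rfl⟩ | ⟨i, hi, rfl⟩)
      · exact hj
      · exact hi
    · intro hp
      by_cases hq : (π.symm p).1 < m
      · refine Or.inl ⟨⟨(π.symm p).1, hq⟩, ?_, ?_⟩ <;>
          rw [show emb3 (⟨(π.symm p).1, hq⟩ : Fin m) = π.symm p from Fin.ext rfl,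
            Equiv.apply_symm_apply]
        exact hp
      · refine Or.inr ⟨⟨(π.symm p).1 - m, by have := (π.symm p).2; omega⟩, ?_, ?_⟩ <;>
          rw [show emb4 (⟨(π.symm p).1 - m, by have := (π.symm p).2; omega⟩ : Fin n) = π.symm p
            from Fin.ext (by show m + ((π.symm p).1 - m) = (π.symm p).1; omega),
            Equiv.apply_symm_apply]
        exact hp
  have hdisj : Disjoint
      (((univ : Finset (Fin m)).filter fun j : Fin m => ((π (emb3 j)) : ℕ) < n).image
        (fun j : Fin m => π (emb3 j)))
      (((univ : Finset (Fin n)).filter fun i : Fin n => ((π (emb4 i)) : ℕ) < n).image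
        (fun i : Fin n => π (emb4 i))) := by
    rw [Finset.disjoint_left]
    rintro p hp3 hp4
    obtain ⟨j, _, rfl⟩ := mem_image.mp hp3
    obtain ⟨i, _, hie⟩ := mem_image.mp hp4
    have := congrArg Fin.val (π.injective hie)
    simp only [emb3, emb4] at this
    have := j.2
    omega
  have hcard := congrArg Finset.card himg
  rw [Finset.card_union_of_disjoint hdisj, Finset.card_image_of_injective _ (emb3_inj π),
    Finset.card_image_of_injective _ (emb4_inj π), card_filter_lt' (n+m) n (by omega)] at hcard
  exact hcard

lemma rOf_le_m (π : Equiv.Perm (Fin (n+m))) : rOf n m π ≤ m := by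
  rw [← S_card_eq_rOf]
  exact le_trans (Finset.card_filter_le _ _) (by simp)

lemma rOf_le_n (π : Equiv.Perm (Fin (n+m))) : rOf n m π ≤ n := by
  rw [← S_card_eq_rOf]
  have := S_S'_cards π
  omega

/-- the `r`-th contraction inner product, as a total function of `r` -/
noncomputable def Jfun (n m : ℕ) (f₁ f₄ : (Fin n → ℕ) → ℝ) (f₂ f₃ : (Fin m → ℕ) → ℝ)
    (r : ℕ) : ℝ :=
  if h : r ≤ m ∧ r ≤ n then
    ip (contr h.2 h.1 (show n + m = 2 * r + (n + m - 2*r) by omega) f₁ f₃)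
       (contr h.2 h.1 (show n + m = 2 * r + (n + m - 2*r) by omega) f₄ f₂)
  else 0

lemma card_rfiber_rOf (n m r : ℕ) (hrm : r ≤ m) (hrn : r ≤ n) :
    (univ.filter fun π : Equiv.Perm (Fin (n+m)) => rOf n m π = r).card
      = (Nat.factorial m * Nat.factorial n) * (n.choose r * m.choose r) := by
  unfold rOf
  exact card_rfiber n m r hrm hrn

set_option maxHeartbeats 2000000 in
lemma perm_term {f₁ f₄ : (Fin n → ℕ) → ℝ} {f₂ f₃ : (Fin m → ℕ) → ℝ}
    (h1 : IsSym f₁) (h4 : IsSym f₄) (h2 : IsSym f₂) (h3 : IsSym f₃)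
    (π : Equiv.Perm (Fin (n+m)))
    (hsum : Summable fun t : Fin (n+m) → ℕ => Ften f₁ f₂ t * Gten f₃ f₄ (t ∘ ⇑π)) :
    ∑' t : Fin (n+m) → ℕ, Ften f₁ f₂ t * Gten f₃ f₄ (t ∘ ⇑π)
      = Jfun n m f₁ f₄ f₂ f₃ (rOf n m π) := by
  classical
  have hScard := S_card_eq_rOf π
  have hparts := S_S'_cards π
  have hrm : rOf n m π ≤ m := rOf_le_m π
  have hrn : rOf n m π ≤ n := rOf_le_n π
  have hcard1 : Fintype.card
      ((univ : Finset (Fin m)).filter fun j : Fin m => ((π (emb3 j)) : ℕ) < n) = rOf n m π := by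
    rw [Fintype.card_coe]; exact hScard
  have hcard2 : Fintype.card
      {j : Fin m // j ∉ (univ : Finset (Fin m)).filter fun j : Fin m => ((π (emb3 j)) : ℕ) < n}
      = m - rOf n m π := by
    rw [Fintype.card_subtype_compl, Fintype.card_fin, hcard1]
  have hcard3 : Fintype.card
      ((univ : Finset (Fin n)).filter fun i : Fin n => ((π (emb4 i)) : ℕ) < n)
      = n - rOf n m π := by
    rw [Fintype.card_coe]; omega
  have hcard4 : Fintype.card
      {i : Fin n // i ∉ (univ : Finset (Fin n)).filter fun i : Fin n => ((π (emb4 i)) : ℕ) < n}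
      = rOf n m π := by
    rw [Fintype.card_subtype_compl, Fintype.card_fin, hcard3]
    omega
  refine Eq.trans (Ctx.key (⟨hrn, hrm, by omega, π,
      (univ : Finset (Fin m)).filter fun j : Fin m => ((π (emb3 j)) : ℕ) < n,
      (univ : Finset (Fin n)).filter fun i : Fin n => ((π (emb4 i)) : ℕ) < n,
      (Fintype.equivFinOfCardEq hcard1).symm,
      (Fintype.equivFinOfCardEq hcard2).symm,
      (Fintype.equivFinOfCardEq hcard3).symm,
      (Fintype.equivFinOfCardEq hcard4).symm⟩ : Ctx n m (rOf n m π) (n + m - 2 * rOf n m π))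
    (fun j => by simp) (fun i => by simp) h1 h4 h2 h3 hsum) ?_
  rw [Jfun, dif_pos ⟨hrm, hrn⟩]
  rfl


end NR
end NRSection

/-- **Lemma on symmetrized tensor products (Lemma `l1`, Nourdin–Rosinski):**
for symmetric `f₁, f₄ ∈ H^{⊗n}` and `f₂, f₃ ∈ H^{⊗m}`,
`⟨f₁ ⊗̃ f₂, f₃ ⊗̃ f₄⟩ = (m! n!/(m+n)!) ∑_{r=0}^{m∧n} C(n,r) C(m,r) ⟨f₁ ⊗_r f₃, f₄ ⊗_r f₂⟩`. -/


theorem inner_symmetrized_tensor_products (n m : ℕ)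
    (f₁ f₄ : (Fin n → ℕ) → ℝ) (f₂ f₃ : (Fin m → ℕ) → ℝ)
    (h1 : IsSym f₁) (h4 : IsSym f₄) (h2 : IsSym f₂) (h3 : IsSym f₃)
    (hs1 : Summable fun j => f₁ j * f₁ j) (hs4 : Summable fun j => f₄ j * f₄ j)
    (hs2 : Summable fun j => f₂ j * f₂ j) (hs3 : Summable fun j => f₃ j * f₃ j) :
    ip (symmize (contr (r := 0) (c := n + m) (by omega) (by omega) (by omega) f₁ f₂))
       (symmize (contr (r := 0) (c := n + m) (by omega) (by omega) (by omega) f₃ f₄))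
      = ((Nat.factorial m : ℝ) * (Nat.factorial n : ℝ) / (Nat.factorial (m + n) : ℝ)) *
          ∑ r ∈ (Finset.range (min m n + 1)).attach,
            (n.choose r : ℝ) * (m.choose r : ℝ) *
              ip (contr (r := (r : ℕ)) (c := n + m - 2 * (r : ℕ))
                    (by have := Finset.mem_range.mp r.2; omega)
                    (by have := Finset.mem_range.mp r.2; omega)
                    (by have := Finset.mem_range.mp r.2; omega) f₁ f₃)
                 (contr (r := (r : ℕ)) (c := n + m - 2 * (r : ℕ))
                    (by have := Finset.mem_range.mp r.2; omega)
                    (by have := Finset.mem_range.mp r.2; omega)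
                    (by have := Finset.mem_range.mp r.2; omega) f₄ f₂) := by
  classical
  have hF : contr (r := 0) (c := n + m) (by omega) (by omega) (by omega) f₁ f₂
      = NR.Ften f₁ f₂ := by
    funext t
    unfold contr NR.Ften
    rw [tsum_eq_single (fun _ : Fin 0 => 0) (fun b hb => absurd (Subsingleton.elim b _) hb)]
    refine congrArg₂ (· * ·) (congrArg f₁ (funext fun i => ?_)) (congrArg f₂ (funext fun i => ?_))
    · rw [dif_neg (show ¬ (i : ℕ) < 0 by omega)]
      exact congrArg t (Fin.ext (show i.1 - 0 = i.1 by omega))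
    · rw [dif_neg (show ¬ (i : ℕ) < 0 by omega)]
      exact congrArg t (Fin.ext (show n - 0 + (i.1 - 0) = n + i.1 by omega))
  have hG : contr (r := 0) (c := n + m) (by omega) (by omega) (by omega) f₃ f₄
      = NR.Gten f₃ f₄ := by
    funext t
    unfold contr NR.Gten
    rw [tsum_eq_single (fun _ : Fin 0 => 0) (fun b hb => absurd (Subsingleton.elim b _) hb)]
    refine congrArg₂ (· * ·) (congrArg f₃ (funext fun i => ?_)) (congrArg f₄ (funext fun i => ?_))
    · rw [dif_neg (show ¬ (i : ℕ) < 0 by omega)]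
      exact congrArg t (Fin.ext (show i.1 - 0 = i.1 by omega))
    · rw [dif_neg (show ¬ (i : ℕ) < 0 by omega)]
      exact congrArg t (Fin.ext (show m - 0 + (i.1 - 0) = m + i.1 by omega))
  rw [hF, hG, NR.lhs_reduce (fun π ρ => NR.summable_cross hs1 hs2 hs3 hs4 π ρ)]
  rw [Finset.sum_congr rfl (fun π _ =>
    NR.perm_term h1 h4 h2 h3 π (NR.summable_cross hs1 hs2 hs3 hs4 1 π))]
  have hfiber : ∑ π : Equiv.Perm (Fin (n+m)), NR.Jfun n m f₁ f₄ f₂ f₃ (NR.rOf n m π)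
      = ∑ r ∈ Finset.range (min m n + 1),
          (((Nat.factorial m * Nat.factorial n) * (n.choose r * m.choose r) : ℕ) : ℝ)
            * NR.Jfun n m f₁ f₄ f₂ f₃ r := by
    rw [← Finset.sum_fiberwise_of_maps_to (g := NR.rOf n m) (t := Finset.range (min m n + 1))
      (fun π _ => Finset.mem_range.mpr (by
        have h1 := NR.rOf_le_m π; have h2 := NR.rOf_le_n π; omega))
      (fun π => NR.Jfun n m f₁ f₄ f₂ f₃ (NR.rOf n m π))]
    refine Finset.sum_congr rfl fun r hr => ?_
    have hrr := Finset.mem_range.mp hr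
    have hJ : ∀ π ∈ Finset.univ.filter (fun π : Equiv.Perm (Fin (n+m)) => NR.rOf n m π = r),
        NR.Jfun n m f₁ f₄ f₂ f₃ (NR.rOf n m π) = NR.Jfun n m f₁ f₄ f₂ f₃ r :=
      fun π hπ => by rw [(Finset.mem_filter.mp hπ).2]
    rw [Finset.sum_congr rfl hJ, Finset.sum_const,
      NR.card_rfiber_rOf n m r (by omega) (by omega), nsmul_eq_mul]
  rw [hfiber]
  have hattach : ∑ r ∈ (Finset.range (min m n + 1)).attach,
        (n.choose r : ℝ) * (m.choose r : ℝ) *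
          ip (contr (r := (r : ℕ)) (c := n + m - 2 * (r : ℕ))
                (by have := Finset.mem_range.mp r.2; omega)
                (by have := Finset.mem_range.mp r.2; omega)
                (by have := Finset.mem_range.mp r.2; omega) f₁ f₃)
             (contr (r := (r : ℕ)) (c := n + m - 2 * (r : ℕ))
                (by have := Finset.mem_range.mp r.2; omega)
                (by have := Finset.mem_range.mp r.2; omega)
                (by have := Finset.mem_range.mp r.2; omega) f₄ f₂)
      = ∑ r ∈ Finset.range (min m n + 1),
          (n.choose r : ℝ) * (m.choose r : ℝ) * NR.Jfun n m f₁ f₄ f₂ f₃ r := by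
    rw [← Finset.sum_attach (Finset.range (min m n + 1))
      (fun r => (n.choose r : ℝ) * (m.choose r : ℝ) * NR.Jfun n m f₁ f₄ f₂ f₃ r)]
    refine Finset.sum_congr rfl fun x _ => ?_
    congr 1
    have hx := Finset.mem_range.mp x.2
    unfold NR.Jfun
    rw [dif_pos ⟨by omega, by omega⟩]
  rw [hattach]
  rw [Finset.mul_sum, Finset.mul_sum]
  refine Finset.sum_congr rfl fun r hr => ?_
  have hne : ((n+m).factorial : ℝ) ≠ 0 := Nat.cast_ne_zero.mpr (Nat.factorial_ne_zero _)
  rw [show m + n = n + m from Nat.add_comm m n]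
  push_cast
  field_simp
end

section
/- Let f, g ∈ H^{⊗m} be symmetric (m = n) and let T_{m−1} be the k = m−1 term in the chaos expansion of E[det Λ] for (I_m(f), I_m(g)), i.e. T_{m−1} = (1/2) ((m−1)!)² ∑_{i,l≥1} (⟨s_{i,f}, s_{l,g}⟩ − ⟨s_{l,f}, s_{i,g}⟩)². Then T_{m−1} = m² (m!)² [ ‖f ⊗_{m−1} g‖² − ⟨f ⊗_1 g, g ⊗_1 f⟩ ]. -/
open Filter Topology

/-! ### Auxiliary lemmas -/

lemma abs_mul_le_half (x y : ℝ) : |x * y| ≤ (x ^ 2 + y ^ 2) / 2 := by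
  rw [abs_mul]
  nlinarith [sq_nonneg (|x| - |y|), sq_abs x, sq_abs y, abs_nonneg x, abs_nonneg y]

lemma summable_mul_of_sq {ι : Type*} {F G : ι → ℝ} (hF : Summable fun j => F j ^ 2)
    (hG : Summable fun j => G j ^ 2) : Summable fun j => F j * G j :=
  summable_abs_iff.mp <| Summable.of_nonneg_of_le (fun _ => abs_nonneg _)
    (fun j => abs_mul_le_half _ _) ((hF.add hG).div_const 2)

lemma tsum_mul_sq_le {ι : Type*} {F G : ι → ℝ} (hF : Summable fun j => F j ^ 2)
    (hG : Summable fun j => G j ^ 2) :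
    (∑' j, F j * G j) ^ 2 ≤ (∑' j, F j ^ 2) * ∑' j, G j ^ 2 := by
  have hFG := summable_mul_of_sq hF hG
  have h1 : Tendsto (fun s : Finset ι => ∑ j ∈ s, F j * G j) atTop (𝓝 (∑' j, F j * G j)) :=
    hFG.hasSum
  refine le_of_tendsto (h1.pow 2) (Filter.Eventually.of_forall fun s => ?_)
  calc (∑ j ∈ s, F j * G j) ^ 2 ≤ (∑ j ∈ s, F j ^ 2) * ∑ j ∈ s, G j ^ 2 :=
        Finset.sum_mul_sq_le_sq_mul_sq s F G
    _ ≤ (∑' j, F j ^ 2) * ∑' j, G j ^ 2 :=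
        mul_le_mul (Summable.sum_le_tsum s (fun i _ => sq_nonneg _) hF)
          (Summable.sum_le_tsum s (fun i _ => sq_nonneg _) hG)
          (Finset.sum_nonneg fun i _ => sq_nonneg _)
          (tsum_nonneg fun _ => sq_nonneg _)

lemma summable_mul_prod {ι κ : Type*} {f : ι → ℝ} {g : κ → ℝ} (hf : Summable f)
    (hg : Summable g) : Summable fun p : ι × κ => f p.1 * g p.2 := by
  refine summable_abs_iff.mp ?_
  exact ((hf.abs.mul_of_nonneg hg.abs (fun _ => abs_nonneg _) fun _ => abs_nonneg _).congr
    fun p => (abs_mul _ _).symm)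

/-- Splitting a tuple of length `c = p + q` into its first `p` and last `q` entries. -/
def splitEquiv (p q c : ℕ) (h : p + q = c) : (Fin c → ℕ) ≃ (Fin p → ℕ) × (Fin q → ℕ) where
  toFun t := (fun i => t ⟨i, by have := i.isLt; omega⟩,
    fun i => t ⟨p + i, by have := i.isLt; omega⟩)
  invFun x := fun k => if hk : (k : ℕ) < p then x.1 ⟨k, hk⟩
    else x.2 ⟨(k : ℕ) - p, by have := k.isLt; omega⟩
  left_inv t := by
    funext k
    by_cases hk : (k : ℕ) < p
    · simp only [dif_pos hk]
    · simp only [dif_neg hk]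
      exact congrArg t (Fin.ext (by simp; omega))
  right_inv x := by
    refine Prod.ext (funext fun i => ?_) (funext fun i => ?_)
    · simp only [dif_pos i.isLt]
    · have hi : ¬ (p + (i : ℕ) < p) := by omega
      simp only [dif_neg hi]
      exact congrArg x.2 (Fin.ext (by simp))

lemma splitEquiv_symm_apply (p q c : ℕ) (h : p + q = c) (x : (Fin p → ℕ) × (Fin q → ℕ))
    (k : Fin c) :
    (splitEquiv p q c h).symm x k = if hk : (k : ℕ) < p then x.1 ⟨k, hk⟩
      else x.2 ⟨(k : ℕ) - p, by have := k.isLt; omega⟩ := rfl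

/-- Separating the first entry of a tuple. -/
def consEquiv (m : ℕ) (hm : 1 ≤ m) : (Fin m → ℕ) ≃ ℕ × (Fin (m - 1) → ℕ) where
  toFun j := (j ⟨0, hm⟩, fun k => j ⟨(k : ℕ) + 1, by have := k.isLt; omega⟩)
  invFun p := fun k => if hk : (k : ℕ) = 0 then p.1
    else p.2 ⟨(k : ℕ) - 1, by have := k.isLt; omega⟩
  left_inv j := by
    funext k
    by_cases hk : (k : ℕ) = 0
    · simp only [dif_pos hk]
      exact congrArg j (Fin.ext hk.symm)
    · simp only [dif_neg hk]
      exact congrArg j (Fin.ext (by simp; omega))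
  right_inv p := by
    refine Prod.ext ?_ (funext fun k => ?_)
    all_goals dsimp only
    · exact dif_pos rfl
    · have hk : ¬ ((((⟨(k : ℕ) + 1, by have := k.isLt; omega⟩ : Fin m)) : ℕ) = 0) := by
        simp
      rw [dif_neg hk]
      exact congrArg p.2 (Fin.ext rfl)

/-- The cyclic rotation of `Fin m`. -/
def rotP (m : ℕ) (hm : 1 ≤ m) : Equiv.Perm (Fin m) where
  toFun i := ⟨if (i : ℕ) + 1 < m then (i : ℕ) + 1 else 0, by have := i.isLt; split <;> omega⟩
  invFun i := ⟨if (i : ℕ) = 0 then m - 1 else (i : ℕ) - 1, by have := i.isLt; split <;> omega⟩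
  left_inv i := by
    have := i.isLt
    apply Fin.ext
    simp only [Fin.val_mk]
    split_ifs <;> first | omega | simp_all
  right_inv i := by
    have := i.isLt
    apply Fin.ext
    simp only [Fin.val_mk]
    split_ifs <;> first | omega | simp_all

/-- `Fc f i = s_{i,f}/m` : the slice of `f` with first index `i`. -/
noncomputable def Fc {m : ℕ} (f : (Fin m → ℕ) → ℝ) (i : ℕ) (j : Fin (m - 1) → ℕ) : ℝ :=
  f fun k => if hk : (k : ℕ) = 0 then i else j ⟨(k : ℕ) - 1, by have := k.isLt; omega⟩

/-- `Ak f g i l = ⟨s_{i,f}, s_{l,g}⟩ / m²`. -/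
noncomputable def Ak {m : ℕ} (f g : (Fin m → ℕ) → ℝ) (i l : ℕ) : ℝ :=
  ∑' j : Fin (m - 1) → ℕ, Fc f i j * Fc g l j

lemma summable_Fc_sq {m : ℕ} (hm : 1 ≤ m) {f : (Fin m → ℕ) → ℝ}
    (hf2 : Summable fun j => f j * f j) :
    Summable fun p : ℕ × (Fin (m - 1) → ℕ) => Fc f p.1 p.2 ^ 2 := by
  have h := (consEquiv m hm).symm.summable_iff.mpr hf2
  refine h.congr fun p => ?_
  show f ((consEquiv m hm).symm p) * f ((consEquiv m hm).symm p) = _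
  exact (sq _).symm

lemma contr_arg_eq {m : ℕ} (hm : 1 ≤ m) (f : (Fin m → ℕ) → ℝ) (hf : IsSym f) (a : ℕ)
    (u : Fin (m - 1) → ℕ) :
    f (fun i : Fin m => if hi : (i : ℕ) < m - 1 then u ⟨i, hi⟩ else a) = Fc f a u := by
  have h := hf (rotP m hm) (fun k => if hk : (k : ℕ) = 0 then a
    else u ⟨(k : ℕ) - 1, by have := k.isLt; omega⟩)
  refine Eq.trans (congrArg f (funext fun i => ?_)) h
  have hlt := i.isLt
  simp only [Function.comp_apply, rotP, Equiv.coe_fn_mk, Fin.val_mk]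
  by_cases hi : (i : ℕ) < m - 1
  · have hrot : (if (i : ℕ) + 1 < m then (i : ℕ) + 1 else 0) = (i : ℕ) + 1 :=
      if_pos (by omega)
    simp only [hrot]
    rw [dif_pos hi, dif_neg (show ¬ ((i : ℕ) + 1 = 0) by omega)]
    exact congrArg u (Fin.ext rfl)
  · have hrot : (if (i : ℕ) + 1 < m then (i : ℕ) + 1 else 0) = 0 := if_neg (by omega)
    simp only [hrot]
    rw [dif_neg hi]
    simp

lemma contr_top_eq {m : ℕ} (hm : 1 ≤ m) {h1 : m - 1 ≤ m} {h2 : m - 1 ≤ m}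
    {h3 : m + m = 2 * (m - 1) + 2} (f g : (Fin m → ℕ) → ℝ)
    (hf : IsSym f) (hg : IsSym g) (t : Fin 2 → ℕ) :
    contr h1 h2 h3 f g t = Ak f g (t 0) (t 1) := by
  unfold contr Ak
  refine tsum_congr fun u => ?_
  congr 1
  · refine Eq.trans (congrArg f (funext fun i => ?_)) (contr_arg_eq hm f hf (t 0) u)
    have hlt := i.isLt
    by_cases hi : (i : ℕ) < m - 1
    · rw [dif_pos hi, dif_pos hi]
    · rw [dif_neg hi, dif_neg hi]
      exact congrArg t (Fin.ext (show (i : ℕ) - (m - 1) = 0 by omega))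
  · refine Eq.trans (congrArg g (funext fun i => ?_)) (contr_arg_eq hm g hg (t 1) u)
    have hlt := i.isLt
    by_cases hi : (i : ℕ) < m - 1
    · rw [dif_pos hi, dif_pos hi]
    · rw [dif_neg hi, dif_neg hi]
      exact congrArg t (Fin.ext (show m - (m - 1) + ((i : ℕ) - (m - 1)) = 1 by omega))

lemma contr_one_eq {m : ℕ} (hm : 1 ≤ m) {h1 : 1 ≤ m} {h2 : 1 ≤ m}
    {h3 : m + m = 2 * 1 + (2 * m - 2)} (hsp : m - 1 + (m - 1) = 2 * m - 2)
    (f g : (Fin m → ℕ) → ℝ) (a b : Fin (m - 1) → ℕ) :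
    contr h1 h2 h3 f g ((splitEquiv (m - 1) (m - 1) (2 * m - 2) hsp).symm (a, b)) =
      ∑' u : ℕ, Fc f u a * Fc g u b := by
  unfold contr
  rw [← Equiv.tsum_eq (Equiv.funUnique (Fin 1) ℕ).symm]
  refine tsum_congr fun u => ?_
  congr 1
  · refine congrArg f (funext fun i => ?_)
    have hlt := i.isLt
    by_cases hi : (i : ℕ) = 0
    · rw [dif_pos (show (i : ℕ) < 1 by omega), dif_pos hi]
      rfl
    · rw [dif_neg (show ¬ ((i : ℕ) < 1) by omega), dif_neg hi]
      rw [splitEquiv_symm_apply]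
      rw [dif_pos (show (i : ℕ) - 1 < m - 1 by omega)]
  · refine congrArg g (funext fun i => ?_)
    have hlt := i.isLt
    by_cases hi : (i : ℕ) = 0
    · rw [dif_pos (show (i : ℕ) < 1 by omega), dif_pos hi]
      rfl
    · rw [dif_neg (show ¬ ((i : ℕ) < 1) by omega), dif_neg hi]
      rw [splitEquiv_symm_apply]
      rw [dif_neg (show ¬ (m - 1 + ((i : ℕ) - 1) < m - 1) by omega)]
      exact congrArg b (Fin.ext (show m - 1 + ((i : ℕ) - 1) - (m - 1) = (i : ℕ) - 1 by omega))

lemma nsq_contr_top {m : ℕ} (hm : 1 ≤ m) {h1 h2 : m - 1 ≤ m} {h3 : m + m = 2 * (m - 1) + 2}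
    (f g : (Fin m → ℕ) → ℝ) (hf : IsSym f) (hg : IsSym g) :
    nsq (contr h1 h2 h3 f g) = ∑' p : ℕ × ℕ, Ak f g p.1 p.2 ^ 2 := by
  unfold nsq ip
  calc ∑' t : Fin 2 → ℕ, contr h1 h2 h3 f g t * contr h1 h2 h3 f g t
      = ∑' t : Fin 2 → ℕ, Ak f g (t 0) (t 1) ^ 2 :=
        tsum_congr fun t => by rw [contr_top_eq hm f g hf hg t]; ring
    _ = ∑' p : ℕ × ℕ, Ak f g p.1 p.2 ^ 2 := by
        rw [← Equiv.tsum_eq (piFinTwoEquiv (fun _ : Fin 2 => ℕ)).symm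
          (fun t => Ak f g (t 0) (t 1) ^ 2)]
        refine tsum_congr fun p => ?_
        simp

/-- The 4-fold kernel appearing in `⟨f ⊗₁ g, g ⊗₁ f⟩`. -/
noncomputable def Pker {m : ℕ} (f g : (Fin m → ℕ) → ℝ)
    (z : (ℕ × ℕ) × ((Fin (m - 1) → ℕ) × (Fin (m - 1) → ℕ))) : ℝ :=
  (Fc f z.1.1 z.2.1 * Fc g z.1.2 z.2.1) * (Fc f z.1.2 z.2.2 * Fc g z.1.1 z.2.2)

lemma summable_Pker {m : ℕ} {f g : (Fin m → ℕ) → ℝ}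
    (hFsq : Summable fun p : ℕ × (Fin (m - 1) → ℕ) => Fc f p.1 p.2 ^ 2)
    (hGsq : Summable fun p : ℕ × (Fin (m - 1) → ℕ) => Fc g p.1 p.2 ^ 2) :
    Summable (Pker f g) := by
  have hF4 : Summable fun z : (ℕ × ℕ) × ((Fin (m - 1) → ℕ) × (Fin (m - 1) → ℕ)) =>
      (Fc f z.1.1 z.2.1 * Fc f z.1.2 z.2.2) ^ 2 := by
    have h := hFsq.mul_of_nonneg hFsq (fun _ => sq_nonneg _) (fun _ => sq_nonneg _)
    refine ((Equiv.prodProdProdComm ℕ ℕ _ _).summable_iff.mpr h).congr fun z => ?_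
    rcases z with ⟨⟨u, v⟩, a, b⟩
    show Fc f u a ^ 2 * Fc f v b ^ 2 = _
    rw [mul_pow]
  have hG4 : Summable fun z : (ℕ × ℕ) × ((Fin (m - 1) → ℕ) × (Fin (m - 1) → ℕ)) =>
      (Fc g z.1.2 z.2.1 * Fc g z.1.1 z.2.2) ^ 2 := by
    have h := hGsq.mul_of_nonneg hGsq (fun _ => sq_nonneg _) (fun _ => sq_nonneg _)
    refine (((Equiv.prodCongr (Equiv.prodComm ℕ ℕ) (Equiv.refl _)).trans
      (Equiv.prodProdProdComm ℕ ℕ _ _)).summable_iff.mpr h).congr fun z => ?_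
    rcases z with ⟨⟨u, v⟩, a, b⟩
    show Fc g v a ^ 2 * Fc g u b ^ 2 = _
    rw [mul_pow]
  refine summable_abs_iff.mp (Summable.of_nonneg_of_le (fun _ => abs_nonneg _)
    (fun z => ?_) ((hF4.add hG4).div_const 2))
  calc |Pker f g z|
      = |(Fc f z.1.1 z.2.1 * Fc f z.1.2 z.2.2) * (Fc g z.1.2 z.2.1 * Fc g z.1.1 z.2.2)| :=
        congrArg abs (by unfold Pker; ring)
    _ ≤ _ := abs_mul_le_half _ _

set_option maxHeartbeats 1000000 in
lemma ip_contr_one {m : ℕ} (hm : 1 ≤ m) {h1 h2 : 1 ≤ m} {h3 : m + m = 2 * 1 + (2 * m - 2)}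
    {h1' h2' : 1 ≤ m} {h3' : m + m = 2 * 1 + (2 * m - 2)}
    (f g : (Fin m → ℕ) → ℝ)
    (hFsq : Summable fun p : ℕ × (Fin (m - 1) → ℕ) => Fc f p.1 p.2 ^ 2)
    (hGsq : Summable fun p : ℕ × (Fin (m - 1) → ℕ) => Fc g p.1 p.2 ^ 2) :
    ip (contr h1 h2 h3 f g) (contr h1' h2' h3' g f)
      = ∑' p : ℕ × ℕ, Ak f g p.1 p.2 * Ak f g p.2 p.1 := by
  have hsp : m - 1 + (m - 1) = 2 * m - 2 := by omega
  have hrowF : ∀ i, Summable fun j => Fc f i j ^ 2 := fun i => hFsq.prod_factor i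
  have hrowG : ∀ i, Summable fun j => Fc g i j ^ 2 := fun i => hGsq.prod_factor i
  have hcolF : ∀ a, Summable fun u : ℕ => Fc f u a ^ 2 := by
    intro a
    have hinj : Function.Injective (fun u : ℕ => (u, a)) := fun x y h => congrArg Prod.fst h
    have h0 := Summable.comp_injective (f := fun p : ℕ × (Fin (m - 1) → ℕ) => Fc f p.1 p.2 ^ 2)
      (i := fun u : ℕ => (u, a)) hFsq hinj
    exact h0.congr fun u => rfl
  have hcolG : ∀ a, Summable fun u : ℕ => Fc g u a ^ 2 := by
    intro a
    have hinj : Function.Injective (fun u : ℕ => (u, a)) := fun x y h => congrArg Prod.fst h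
    have h0 := Summable.comp_injective (f := fun p : ℕ × (Fin (m - 1) → ℕ) => Fc g p.1 p.2 ^ 2)
      (i := fun u : ℕ => (u, a)) hGsq hinj
    exact h0.congr fun u => rfl
  have hP : Summable (Pker f g) := summable_Pker hFsq hGsq
  have hQ : Summable fun z : ((Fin (m - 1) → ℕ) × (Fin (m - 1) → ℕ)) × (ℕ × ℕ) =>
      (Fc f z.2.1 z.1.1 * Fc g z.2.1 z.1.2) * (Fc g z.2.2 z.1.1 * Fc f z.2.2 z.1.2) := by
    refine ((Equiv.prodComm _ _).summable_iff.mpr hP).congr fun z => ?_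
    rcases z with ⟨⟨a, b⟩, u, v⟩
    show Pker f g ((u, v), (a, b)) = _
    unfold Pker
    ring
  unfold ip
  rw [← Equiv.tsum_eq (splitEquiv (m - 1) (m - 1) (2 * m - 2) hsp).symm
    (fun t => contr h1 h2 h3 f g t * contr h1' h2' h3' g f t)]
  calc ∑' q : (Fin (m - 1) → ℕ) × (Fin (m - 1) → ℕ),
        contr h1 h2 h3 f g ((splitEquiv (m - 1) (m - 1) (2 * m - 2) hsp).symm q) *
        contr h1' h2' h3' g f ((splitEquiv (m - 1) (m - 1) (2 * m - 2) hsp).symm q)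
      = ∑' q : (Fin (m - 1) → ℕ) × (Fin (m - 1) → ℕ),
          (∑' u : ℕ, Fc f u q.1 * Fc g u q.2) * (∑' v : ℕ, Fc g v q.1 * Fc f v q.2) := by
        refine tsum_congr fun q => ?_
        rcases q with ⟨a, b⟩
        rw [contr_one_eq hm hsp f g a b, contr_one_eq hm hsp g f a b]
    _ = ∑' q : (Fin (m - 1) → ℕ) × (Fin (m - 1) → ℕ), ∑' w : ℕ × ℕ,
          (Fc f w.1 q.1 * Fc g w.1 q.2) * (Fc g w.2 q.1 * Fc f w.2 q.2) := by
        refine tsum_congr fun q => ?_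
        exact Summable.tsum_mul_tsum (f := fun u : ℕ => Fc f u q.1 * Fc g u q.2)
          (g := fun v : ℕ => Fc g v q.1 * Fc f v q.2)
          (summable_mul_of_sq (hcolF q.1) (hcolG q.2))
          (summable_mul_of_sq (hcolG q.1) (hcolF q.2))
          (summable_mul_prod (f := fun u : ℕ => Fc f u q.1 * Fc g u q.2)
            (g := fun v : ℕ => Fc g v q.1 * Fc f v q.2)
            (summable_mul_of_sq (hcolF q.1) (hcolG q.2))
            (summable_mul_of_sq (hcolG q.1) (hcolF q.2)))
    _ = ∑' z : ((Fin (m - 1) → ℕ) × (Fin (m - 1) → ℕ)) × (ℕ × ℕ),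
          (Fc f z.2.1 z.1.1 * Fc g z.2.1 z.1.2) * (Fc g z.2.2 z.1.1 * Fc f z.2.2 z.1.2) :=
        (Summable.tsum_prod hQ).symm
    _ = ∑' z : ((Fin (m - 1) → ℕ) × (Fin (m - 1) → ℕ)) × (ℕ × ℕ),
          Pker f g ((Equiv.prodComm _ _) z) := by
        refine tsum_congr fun z => ?_
        rcases z with ⟨⟨a, b⟩, u, v⟩
        show _ = Pker f g ((u, v), (a, b))
        unfold Pker
        ring
    _ = ∑' y : (ℕ × ℕ) × ((Fin (m - 1) → ℕ) × (Fin (m - 1) → ℕ)), Pker f g y :=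
        Equiv.tsum_eq (Equiv.prodComm _ _) (Pker f g)
    _ = ∑' p : ℕ × ℕ, ∑' ab : (Fin (m - 1) → ℕ) × (Fin (m - 1) → ℕ), Pker f g (p, ab) :=
        Summable.tsum_prod hP
    _ = ∑' p : ℕ × ℕ, Ak f g p.1 p.2 * Ak f g p.2 p.1 := by
        refine tsum_congr fun p => ?_
        exact (Summable.tsum_mul_tsum (f := fun a => Fc f p.1 a * Fc g p.2 a)
          (g := fun b => Fc f p.2 b * Fc g p.1 b)
          (summable_mul_of_sq (hrowF p.1) (hrowG p.2))
          (summable_mul_of_sq (hrowF p.2) (hrowG p.1))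
          (summable_mul_prod (f := fun a => Fc f p.1 a * Fc g p.2 a)
            (g := fun b => Fc f p.2 b * Fc g p.1 b)
            (summable_mul_of_sq (hrowF p.1) (hrowG p.2))
            (summable_mul_of_sq (hrowF p.2) (hrowG p.1)))).symm

set_option maxHeartbeats 1000000 in
/-- **The last term of the chaos expansion (Proposition for `T_{m−1}`):**
for symmetric `f, g ∈ H^{⊗m}`,
`T_{m−1} = (1/2)((m−1)!)² ∑_{i,l} (⟨s_{i,f}, s_{l,g}⟩ − ⟨s_{l,f}, s_{i,g}⟩)²
         = m² (m!)² (‖f ⊗_{m−1} g‖² − ⟨f ⊗₁ g, g ⊗₁ f⟩)`. -/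
theorem T_last_formula (m : ℕ) (hm : 1 ≤ m)
    (f g : (Fin m → ℕ) → ℝ) (hf : IsSym f) (hg : IsSym g)
    (hf2 : Summable fun j => f j * f j) (hg2 : Summable fun j => g j * g j) :
    (1 / 2) * (Nat.factorial (m - 1) : ℝ) ^ 2 *
        ∑' il : ℕ × ℕ,
          (ip (sder f il.1) (sder g il.2) - ip (sder f il.2) (sder g il.1)) ^ 2
      = (m : ℝ) ^ 2 * (Nat.factorial m : ℝ) ^ 2 *
          (nsq (contr (r := m - 1) (c := 2) (by omega) (by omega) (by omega) f g)
            - ip (contr (r := 1) (c := 2 * m - 2) (by omega) (by omega) (by omega) f g)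
                 (contr (r := 1) (c := 2 * m - 2) (by omega) (by omega) (by omega) g f)) := by
  have hFsq : Summable fun p : ℕ × (Fin (m - 1) → ℕ) => Fc f p.1 p.2 ^ 2 :=
    summable_Fc_sq hm hf2
  have hGsq : Summable fun p : ℕ × (Fin (m - 1) → ℕ) => Fc g p.1 p.2 ^ 2 :=
    summable_Fc_sq hm hg2
  have hrowF : ∀ i, Summable fun j => Fc f i j ^ 2 := fun i => hFsq.prod_factor i
  have hrowG : ∀ i, Summable fun j => Fc g i j ^ 2 := fun i => hGsq.prod_factor i
  have haF : Summable fun i : ℕ => ∑' j, Fc f i j ^ 2 := hFsq.prod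
  have haG : Summable fun i : ℕ => ∑' j, Fc g i j ^ 2 := hGsq.prod
  have hA2 : Summable fun p : ℕ × ℕ => Ak f g p.1 p.2 ^ 2 := by
    refine Summable.of_nonneg_of_le (fun p => sq_nonneg _) (fun p => ?_)
      (haF.mul_of_nonneg haG (fun i => tsum_nonneg fun _ => sq_nonneg _)
        (fun i => tsum_nonneg fun _ => sq_nonneg _))
    exact tsum_mul_sq_le (hrowF p.1) (hrowG p.2)
  have hA2' : Summable fun p : ℕ × ℕ => Ak f g p.2 p.1 ^ 2 :=
    (Equiv.prodComm ℕ ℕ).summable_iff.mpr hA2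
  have hAA : Summable fun p : ℕ × ℕ => Ak f g p.1 p.2 * Ak f g p.2 p.1 :=
    summable_abs_iff.mp <| Summable.of_nonneg_of_le (fun _ => abs_nonneg _)
      (fun p => abs_mul_le_half _ _) ((hA2.add hA2').div_const 2)
  have hsder : ∀ i l : ℕ, ip (sder f i) (sder g l) = (m : ℝ) ^ 2 * Ak f g i l := by
    intro i l
    unfold ip Ak
    calc ∑' j, sder f i j * sder g l j
        = ∑' j : Fin (m - 1) → ℕ, (m : ℝ) ^ 2 * (Fc f i j * Fc g l j) :=
          tsum_congr fun j => by
            show ((m : ℝ) * Fc f i j) * ((m : ℝ) * Fc g l j) = _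
            ring
      _ = (m : ℝ) ^ 2 * ∑' j, Fc f i j * Fc g l j := tsum_mul_left
  have hS : (∑' il : ℕ × ℕ,
        (ip (sder f il.1) (sder g il.2) - ip (sder f il.2) (sder g il.1)) ^ 2)
      = (m : ℝ) ^ 4 * (2 * (∑' p : ℕ × ℕ, Ak f g p.1 p.2 ^ 2)
          - 2 * ∑' p : ℕ × ℕ, Ak f g p.1 p.2 * Ak f g p.2 p.1) := by
    have e1 : ∀ il : ℕ × ℕ,
        (ip (sder f il.1) (sder g il.2) - ip (sder f il.2) (sder g il.1)) ^ 2
        = (m : ℝ) ^ 4 * ((Ak f g il.1 il.2 ^ 2 + Ak f g il.2 il.1 ^ 2)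
            - 2 * (Ak f g il.1 il.2 * Ak f g il.2 il.1)) := by
      intro il
      rw [hsder, hsder]
      ring
    rw [tsum_congr e1, tsum_mul_left]
    rw [Summable.tsum_sub (hA2.add hA2') (hAA.mul_left 2), Summable.tsum_add hA2 hA2', tsum_mul_left]
    have hswap : (∑' p : ℕ × ℕ, Ak f g p.2 p.1 ^ 2) = ∑' p : ℕ × ℕ, Ak f g p.1 p.2 ^ 2 :=
      Equiv.tsum_eq (Equiv.prodComm ℕ ℕ) (fun p => Ak f g p.1 p.2 ^ 2)
    rw [hswap]
    ring
  have hfac : (Nat.factorial m : ℝ) = (m : ℝ) * (Nat.factorial (m - 1) : ℝ) := by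
    rw [← Nat.mul_factorial_pred (by omega : m ≠ 0)]
    push_cast
    ring
  rw [hS, nsq_contr_top hm f g hf hg, ip_contr_one hm f g hFsq hGsq, hfac]
  ring
end
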